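/- arXiv:2205.03577 — 10 statements merged into one kernel-verified Lean document; each statement's English description precedes it below -/
import Mathlib

section
/- Let D be a linear map from polynomials to ℝ such that |D(r·p_i)| ≤ 1 for all i ∈ [m] and all monomials r. Then any Nullstellensatz proof 1 = ∑_{i=1}^{m} p_i q_i has total coefficient size ∑_{i=1}^{m} T(q_i) ≥ D(1), where T(q) is the sum of absolute values of the coefficients of q. -/
/-- If D is a linear functional on polynomials with |D(r·p_i)| ≤ 1 for all
axioms p_i and monomials r, then any Nullstellensatz proof 1 = ∑ p_i q_i has total
coefficient size ∑ T(q_i) ≥ D(1). -/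
theorem stmt2 {σ : Type*} (m : ℕ) (D : MvPolynomial σ ℝ →ₗ[ℝ] ℝ)
    (p q : Fin m → MvPolynomial σ ℝ)
    (hD : ∀ i : Fin m, ∀ r : σ →₀ ℕ, |D (MvPolynomial.monomial r 1 * p i)| ≤ 1)
    (hproof : (1 : MvPolynomial σ ℝ) = ∑ i : Fin m, p i * q i) :
    D 1 ≤ ∑ i : Fin m, ∑ r ∈ (q i).support, |(q i).coeff r| := by
  have hq : ∀ i : Fin m, p i * q i
      = ∑ r ∈ (q i).support, (q i).coeff r • (MvPolynomial.monomial r 1 * p i) := by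
    intro i
    conv_lhs => rw [MvPolynomial.as_sum (q i)]
    rw [Finset.mul_sum]
    refine Finset.sum_congr rfl fun r _ => ?_
    rw [← smul_mul_assoc, MvPolynomial.smul_monomial, smul_eq_mul, mul_one, mul_comm]
  calc D 1 = ∑ i : Fin m, ∑ r ∈ (q i).support,
        (q i).coeff r * D (MvPolynomial.monomial r 1 * p i) := by
        rw [hproof, map_sum]
        refine Finset.sum_congr rfl fun i _ => ?_
        rw [hq i, map_sum]
        refine Finset.sum_congr rfl fun r _ => ?_
        rw [map_smul, smul_eq_mul]
    _ ≤ ∑ i : Fin m, ∑ r ∈ (q i).support, |(q i).coeff r| := by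
        refine Finset.sum_le_sum fun i _ => Finset.sum_le_sum fun r _ => ?_
        calc (q i).coeff r * D (MvPolynomial.monomial r 1 * p i)
            ≤ |(q i).coeff r * D (MvPolynomial.monomial r 1 * p i)| := le_abs_self _
          _ = |(q i).coeff r| * |D (MvPolynomial.monomial r 1 * p i)| := abs_mul _ _
          _ ≤ |(q i).coeff r| * 1 := by
              exact mul_le_mul_of_nonneg_left (hD i r) (abs_nonneg _)
          _ = |(q i).coeff r| := mul_one _
end

section
/- Let D: {0,1}^N → ℝ and extend D to a linear functional on functions f: {0,1}^N → ℝ by D(f) = ∑_{x} f(x)D(x). If p is a Nullstellensatz refutation of a system of Boolean axioms p_i (i.e., ∑_i p_i q_i = 1 as functions on {0,1}^N) and |D(r·p_i)| ≤ 1 for every i and every monomial r (products of variables and their negations), then ∑_i T(q_i) ≥ D(1). -/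
/-- The Boolean monomial ∏_{i∈S} x_i · ∏_{j∈T} (1 - x_j), as a real-valued function
on assignments x ∈ {0,1}^N. -/
noncomputable def boolMono (N : ℕ) (S T : Finset (Fin N)) (x : Fin N → Bool) : ℝ :=
  (∏ i ∈ S, if x i then (1 : ℝ) else 0) * ∏ j ∈ T, if x j then (0 : ℝ) else 1

/-- If ∑_i p_i q_i = 1 on {0,1}^N, where each q_i = ∑_{(S,T)} c_i(S,T)·mono(S,T)
is a combination of monomials, and the linear functional D(f) = ∑_x f(x) D(x) satisfies
|D(r · p_i)| ≤ 1 for every axiom p_i and monomial r, then ∑_i T(q_i) ≥ D(1). -/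
theorem stmt3 (N m : ℕ) (D : (Fin N → Bool) → ℝ)
    (p : Fin m → (Fin N → Bool) → ℝ)
    (W : Finset (Finset (Fin N) × Finset (Fin N)))
    (hWdisj : ∀ st ∈ W, Disjoint st.1 st.2)
    (c : Fin m → Finset (Fin N) × Finset (Fin N) → ℝ)
    (hD : ∀ i : Fin m, ∀ S T : Finset (Fin N), Disjoint S T →
      |∑ x : Fin N → Bool, boolMono N S T x * p i x * D x| ≤ 1)
    (hproof : ∀ x : Fin N → Bool,
      ∑ i : Fin m, ∑ st ∈ W, c i st * boolMono N st.1 st.2 x * p i x = 1) :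
    ∑ x : Fin N → Bool, D x ≤ ∑ i : Fin m, ∑ st ∈ W, |c i st| := by
  have key : ∑ x : Fin N → Bool, D x
      = ∑ i : Fin m, ∑ st ∈ W, c i st *
        ∑ x : Fin N → Bool, boolMono N st.1 st.2 x * p i x * D x := by
    calc ∑ x : Fin N → Bool, D x
        = ∑ x : Fin N → Bool, (∑ i : Fin m, ∑ st ∈ W,
            c i st * boolMono N st.1 st.2 x * p i x) * D x := by
          refine Finset.sum_congr rfl fun x _ => ?_
          rw [hproof x, one_mul]
      _ = ∑ x : Fin N → Bool, ∑ i : Fin m, ∑ st ∈ W,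
            c i st * (boolMono N st.1 st.2 x * p i x * D x) := by
          refine Finset.sum_congr rfl fun x _ => ?_
          rw [Finset.sum_mul]
          refine Finset.sum_congr rfl fun i _ => ?_
          rw [Finset.sum_mul]
          refine Finset.sum_congr rfl fun st _ => ?_
          ring
      _ = ∑ i : Fin m, ∑ x : Fin N → Bool, ∑ st ∈ W,
            c i st * (boolMono N st.1 st.2 x * p i x * D x) :=
          Finset.sum_comm
      _ = ∑ i : Fin m, ∑ st ∈ W, ∑ x : Fin N → Bool,
            c i st * (boolMono N st.1 st.2 x * p i x * D x) :=
          Finset.sum_congr rfl fun i _ => Finset.sum_comm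
      _ = ∑ i : Fin m, ∑ st ∈ W, c i st *
            ∑ x : Fin N → Bool, boolMono N st.1 st.2 x * p i x * D x := by
          refine Finset.sum_congr rfl fun i _ => Finset.sum_congr rfl fun st _ => ?_
          rw [Finset.mul_sum]
  rw [key]
  refine Finset.sum_le_sum fun i _ => Finset.sum_le_sum fun st hst => ?_
  calc c i st * ∑ x : Fin N → Bool, boolMono N st.1 st.2 x * p i x * D x
      ≤ |c i st * ∑ x : Fin N → Bool, boolMono N st.1 st.2 x * p i x * D x| :=
        le_abs_self _
    _ = |c i st| * |∑ x : Fin N → Bool, boolMono N st.1 st.2 x * p i x * D x| :=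
        abs_mul _ _
    _ ≤ |c i st| * 1 := by
        exact mul_le_mul_of_nonneg_left (hD i st.1 st.2 (hWdisj st hst)) (abs_nonneg _)
    _ = |c i st| := mul_one _
end

section
/- Define D = ∑_{S ⊊ [n]} c_S J_S where c_S = (-1)^{n-1-|S|}(n-1-|S|)!/(n-1)^{n-1-|S|} and J_S is the indicator that the pigeons in S go to distinct holes, under the uniform distribution on assignments of n pigeons to n-1 holes. If p is any function of the assignment that does not depend on the hole of pigeon i, then E[D·p] = E[J_{[n]\{i}}·p]. -/
/-- J_S: indicator that all pigeons in S go to distinct holes under assignment x. -/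
noncomputable def Jind (n : ℕ) (S : Finset (Fin n)) (x : Fin n → Fin (n - 1)) : ℝ :=
  if Set.InjOn x S then 1 else 0

/-- The coefficient c_S = (-1)^{n-1-|S|} (n-1-|S|)! / (n-1)^{n-1-|S|}. -/
noncomputable def cCoef (n : ℕ) (S : Finset (Fin n)) : ℝ :=
  (-1) ^ (n - 1 - S.card) * (Nat.factorial (n - 1 - S.card) : ℝ) /
    ((n : ℝ) - 1) ^ (n - 1 - S.card)

/-- The dual solution D = ∑_{S ⊊ [n]} c_S J_S as a function on assignments. -/
noncomputable def Dfun (n : ℕ) (x : Fin n → Fin (n - 1)) : ℝ :=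
  ∑ S ∈ Finset.univ.filter (fun S : Finset (Fin n) => S ≠ Finset.univ),
    cCoef n S * Jind n S x

def updEquiv (n : ℕ) (i : Fin n) :
    ((Fin n → Fin (n - 1)) × Fin (n - 1)) ≃ ((Fin n → Fin (n - 1)) × Fin (n - 1)) where
  toFun q := (Function.update q.1 i q.2, q.1 i)
  invFun q := (Function.update q.1 i q.2, q.1 i)
  left_inv q := by simp [Function.update_idem]
  right_inv q := by simp [Function.update_idem]

lemma sum_update (n : ℕ) (i : Fin n) (f : (Fin n → Fin (n - 1)) → ℝ) :
    ∑ x : Fin n → Fin (n - 1), ∑ a : Fin (n - 1), f (Function.update x i a)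
      = ((n - 1 : ℕ) : ℝ) * ∑ x : Fin n → Fin (n - 1), f x := by
  have h1 : ∑ x : Fin n → Fin (n - 1), ∑ a : Fin (n - 1), f (Function.update x i a)
      = ∑ q : (Fin n → Fin (n - 1)) × Fin (n - 1), f (Function.update q.1 i q.2) :=
    (Fintype.sum_prod_type (f := fun q : (Fin n → Fin (n - 1)) × Fin (n - 1) =>
      f (Function.update q.1 i q.2))).symm
  have h2 : ∑ q : (Fin n → Fin (n - 1)) × Fin (n - 1), f (Function.update q.1 i q.2)
      = ∑ q : (Fin n → Fin (n - 1)) × Fin (n - 1), (fun q => f q.1) (updEquiv n i q) := rfl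
  rw [h1, h2, Equiv.sum_comp (updEquiv n i) (fun q => f q.1), Fintype.sum_prod_type]
  simp [Finset.mul_sum, mul_comm]

lemma key (n : ℕ) (i : Fin n) (S : Finset (Fin n)) (hiS : i ∉ S)
    (p : (Fin n → Fin (n - 1)) → ℝ)
    (hp : ∀ x y : Fin n → Fin (n - 1), (∀ j : Fin n, j ≠ i → x j = y j) → p x = p y) :
    ((n - 1 : ℕ) : ℝ) * ∑ x : Fin n → Fin (n - 1), Jind n (insert i S) x * p x
      = ((n - 1 - S.card : ℕ) : ℝ) * ∑ x : Fin n → Fin (n - 1), Jind n S x * p x := by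
  rw [← sum_update n i (fun x => Jind n (insert i S) x * p x), Finset.mul_sum]
  apply Finset.sum_congr rfl
  intro x _
  have hpx : ∀ a : Fin (n - 1), p (Function.update x i a) = p x := fun a =>
    hp _ _ (fun j hj => Function.update_of_ne hj _ _)
  have heq : ∀ a : Fin (n - 1), Set.EqOn (Function.update x i a) x ↑S := fun a j hj =>
    Function.update_of_ne (ne_of_mem_of_not_mem hj hiS) _ _
  have hJ : ∀ a : Fin (n - 1), Jind n (insert i S) (Function.update x i a)
      = if Set.InjOn x ↑S ∧ a ∉ Finset.image x S then 1 else 0 := by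
    intro a
    unfold Jind
    refine if_congr ?_ rfl rfl
    rw [Finset.coe_insert, Set.injOn_insert (by simpa using hiS)]
    have himg : Function.update x i a '' ↑S = x '' ↑S := Set.image_congr (heq a)
    rw [himg, Function.update_self]
    constructor
    · rintro ⟨h1, h2⟩
      exact ⟨h1.congr (heq a), by simpa [Finset.coe_image] using h2⟩
    · rintro ⟨h1, h2⟩
      exact ⟨h1.congr (heq a).symm, by simpa [Finset.coe_image] using h2⟩
  simp only [hJ, hpx]
  by_cases hInj : Set.InjOn x ↑S
  · have hJS : Jind n S x = 1 := if_pos hInj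
    rw [hJS, ← Finset.sum_mul]
    have hcount : ∑ a : Fin (n - 1), (if Set.InjOn x ↑S ∧ a ∉ Finset.image x S then (1:ℝ) else 0)
        = ((n - 1 - S.card : ℕ) : ℝ) := by
      simp only [hInj, true_and]
      rw [Finset.sum_boole]
      have : Finset.univ.filter (fun a : Fin (n-1) => a ∉ Finset.image x S)
          = (Finset.image x S)ᶜ := by ext a; simp
      rw [this, Finset.card_compl, Finset.card_image_of_injOn hInj]
      simp
    rw [hcount]
    ring
  · have hJS : Jind n S x = 0 := if_neg hInj
    simp [hJS, hInj]

lemma pair_cancel (n : ℕ) (hn : 2 ≤ n) (i : Fin n)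
    (p : (Fin n → Fin (n - 1)) → ℝ)
    (hp : ∀ x y : Fin n → Fin (n - 1), (∀ j : Fin n, j ≠ i → x j = y j) → p x = p y)
    (S : Finset (Fin n)) (hS : S ⊆ Finset.univ.erase i) (hne : S ≠ Finset.univ.erase i) :
    cCoef n S * ∑ x : Fin n → Fin (n - 1), Jind n S x * p x
      + cCoef n (insert i S) * ∑ x : Fin n → Fin (n - 1), Jind n (insert i S) x * p x = 0 := by
  have hiS : i ∉ S := fun h => (Finset.mem_erase.mp (hS h)).1 rfl
  have hTcard : (Finset.univ.erase i : Finset (Fin n)).card = n - 1 := by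
    simp [Finset.card_erase_of_mem]
  have hcard : S.card < n - 1 := by
    rw [← hTcard]
    exact Finset.card_lt_card (HasSubset.Subset.ssubset_of_ne hS hne)
  set k := n - 2 - S.card with hk
  have h1 : n - 1 - S.card = k + 1 := by omega
  have h2 : n - 1 - (insert i S).card = k := by
    rw [Finset.card_insert_of_notMem hiS]; omega
  have hX : ((n : ℝ) - 1) ≠ 0 := by
    have : (2 : ℝ) ≤ (n : ℝ) := by exact_mod_cast hn
    linarith
  have hcast : ((n - 1 : ℕ) : ℝ) = (n : ℝ) - 1 := by
    have : (1:ℕ) ≤ n := by omega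
    push_cast [this]; ring
  have hB := key n i S hiS p hp
  rw [hcast, h1] at hB
  set A := ∑ x : Fin n → Fin (n - 1), Jind n S x * p x
  set B := ∑ x : Fin n → Fin (n - 1), Jind n (insert i S) x * p x
  -- hB : ((n:ℝ)-1) * B = ((k+1 : ℕ):ℝ) * A
  have hB' : B = ((k : ℝ) + 1) * A / ((n : ℝ) - 1) := by
    rw [eq_div_iff hX]
    push_cast at hB
    linarith [hB]
  simp only [cCoef, h1, h2]
  rw [hB', Nat.factorial_succ]
  push_cast
  field_simp
  ring

/-- If p does not depend on the hole of pigeon i, then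
E[D·p] = E[J_{[n]∖{i}}·p] (expectations over uniform assignments of n pigeons
to n-1 holes). -/
theorem stmt4 (n : ℕ) (hn : 2 ≤ n) (i : Fin n) (p : (Fin n → Fin (n - 1)) → ℝ)
    (hp : ∀ x y : Fin n → Fin (n - 1), (∀ j : Fin n, j ≠ i → x j = y j) → p x = p y) :
    (∑ x : Fin n → Fin (n - 1), Dfun n x * p x) / ((n : ℝ) - 1) ^ n =
      (∑ x : Fin n → Fin (n - 1), Jind n (Finset.univ.erase i) x * p x) /
        ((n : ℝ) - 1) ^ n := by
  congr 1
  set T : Finset (Fin n) := Finset.univ.erase i with hT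
  set g : Finset (Fin n) → ℝ :=
    fun S => cCoef n S * ∑ x : Fin n → Fin (n - 1), Jind n S x * p x with hg
  have hswap : ∑ x : Fin n → Fin (n - 1), Dfun n x * p x
      = ∑ S ∈ Finset.univ.filter (fun S : Finset (Fin n) => S ≠ Finset.univ), g S := by
    simp only [Dfun, Finset.sum_mul]
    rw [Finset.sum_comm]
    simp [hg, Finset.mul_sum, mul_assoc]
  rw [hswap]
  have hiT : i ∉ T := fun h => (Finset.mem_erase.mp h).1 rfl
  have hsplit : (Finset.univ.filter fun S : Finset (Fin n) => S ≠ Finset.univ)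
      = T.powerset ∪ (T.powerset.erase T).image (insert i) := by
    ext S
    simp only [Finset.mem_filter, Finset.mem_univ, true_and, Finset.mem_union,
      Finset.mem_powerset, Finset.mem_image, Finset.mem_erase]
    constructor
    · intro hS
      by_cases hi : i ∈ S
      · right
        refine ⟨S.erase i, ⟨?_, ?_⟩, Finset.insert_erase hi⟩
        · intro h
          apply hS
          rw [← Finset.insert_erase hi, h, hT, Finset.insert_erase (Finset.mem_univ i)]
        · exact Finset.erase_subset_erase _ (Finset.subset_univ S)
      · left
        exact Finset.subset_erase.mpr ⟨Finset.subset_univ S, hi⟩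
    · rintro (h | ⟨S', ⟨hne', hsub'⟩, rfl⟩)
      · intro hEq
        rw [hEq] at h
        exact hiT (h (Finset.mem_univ i))
      · intro hEq
        apply hne'
        have hiS' : i ∉ S' := fun h => hiT (hsub' h)
        rw [← Finset.erase_insert hiS', hEq]
    -- hT : T = univ.erase i
  have hdisj : Disjoint T.powerset ((T.powerset.erase T).image (insert i)) := by
    rw [Finset.disjoint_left]
    intro S hS hS2
    obtain ⟨S', hS', rfl⟩ := Finset.mem_image.mp hS2
    have := Finset.mem_powerset.mp hS
    exact hiT (this (Finset.mem_insert_self i S'))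
  rw [hsplit, Finset.sum_union hdisj]
  have hinj : ∀ S1 ∈ T.powerset.erase T, ∀ S2 ∈ T.powerset.erase T,
      insert i S1 = insert i S2 → S1 = S2 := by
    intro S1 h1 S2 h2 h
    have hi1 : i ∉ S1 := fun hh => hiT (Finset.mem_powerset.mp (Finset.mem_erase.mp h1).2 hh)
    have hi2 : i ∉ S2 := fun hh => hiT (Finset.mem_powerset.mp (Finset.mem_erase.mp h2).2 hh)
    rw [← Finset.erase_insert hi1, h, Finset.erase_insert hi2]
  rw [Finset.sum_image hinj]
  rw [← Finset.sum_erase_add T.powerset g (Finset.mem_powerset_self T)]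
  have hz : ∑ S ∈ T.powerset.erase T, g S + ∑ S ∈ T.powerset.erase T, g (insert i S) = 0 := by
    rw [← Finset.sum_add_distrib]
    apply Finset.sum_eq_zero
    intro S hS
    have hmem := Finset.mem_erase.mp hS
    exact pair_cancel n hn i p hp S (Finset.mem_powerset.mp hmem.2) hmem.1
  have hgT : g T = ∑ x : Fin n → Fin (n - 1), Jind n T x * p x := by
    have hTcard : T.card = n - 1 := by simp [hT, Finset.card_erase_of_mem]
    have : n - 1 - T.card = 0 := by omega
    simp [hg, cCoef, this]
  calc ∑ S ∈ T.powerset.erase T, g S + g T + ∑ S ∈ T.powerset.erase T, g (insert i S)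
      = g T + (∑ S ∈ T.powerset.erase T, g S + ∑ S ∈ T.powerset.erase T, g (insert i S)) := by
        ring
    _ = g T := by rw [hz, add_zero]
    _ = _ := hgT
end

section
/- With D = ∑_{S ⊊ [n]} c_S J_S where c_S = (-1)^{n-1-|S|}(n-1-|S|)!/(n-1)^{n-1-|S|}, the expectation of D over a uniform assignment of n pigeons to n-1 holes equals (n-2)!/(n-1)^{n-2}. -/
section PigeonAux

open Finset

/-- Splitting an assignment injective on `S` into an embedding on `S`
and an arbitrary map on the complement. -/
noncomputable def injOnEquiv (n : ℕ) (S : Finset (Fin n)) :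
    {x : Fin n → Fin (n - 1) // Set.InjOn x S} ≃
      {g : S → Fin (n - 1) // Function.Injective g} × ((Sᶜ : Finset (Fin n)) → Fin (n - 1)) where
  toFun x := (⟨fun i => x.1 i.1, fun a b hab => Subtype.ext (x.2 a.2 b.2 hab)⟩,
              fun i => x.1 i.1)
  invFun gh := ⟨fun i => if hi : i ∈ S then gh.1.1 ⟨i, hi⟩ else gh.2 ⟨i, Finset.mem_compl.2 hi⟩,
    by
      intro a ha b hb hab
      simp only [Finset.mem_coe] at ha hb
      simp only [dif_pos ha, dif_pos hb] at hab
      exact congrArg Subtype.val (gh.1.2 hab)⟩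
  left_inv x := by
    ext i
    by_cases hi : i ∈ S <;> simp [hi]
  right_inv gh := by
    refine Prod.ext ?_ ?_
    · ext a
      simp [a.2]
    · ext a
      have ha := Finset.mem_compl.1 a.2
      simp [ha]

lemma card_injOn (n : ℕ) (S : Finset (Fin n)) [Fintype {x : Fin n → Fin (n - 1) // Set.InjOn x S}] :
    Fintype.card {x : Fin n → Fin (n - 1) // Set.InjOn x S} =
      (n - 1).descFactorial S.card * (n - 1) ^ (n - S.card) := by
  classical
  rw [Fintype.card_congr (injOnEquiv n S), Fintype.card_prod,
      Fintype.card_congr (Equiv.subtypeInjectiveEquivEmbedding _ _),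
      Fintype.card_embedding_eq, Fintype.card_fun]
  simp [Fintype.card_coe, Finset.card_compl]

lemma sumJ (n : ℕ) (S : Finset (Fin n)) :
    ∑ x : Fin n → Fin (n - 1), Jind n S x =
      (((n - 1).descFactorial S.card * (n - 1) ^ (n - S.card) : ℕ) : ℝ) := by
  classical
  unfold Jind
  rw [Finset.sum_boole]
  norm_cast
  rw [← Fintype.card_subtype]
  exact card_injOn n S

lemma altsum (n : ℕ) (hn : 1 ≤ n) :
    ∑ j ∈ Finset.range n, (-1 : ℝ) ^ j * (n.choose j : ℝ) = (-1 : ℝ) ^ (n - 1) := by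
  have h := Int.alternating_sum_range_choose_of_ne (by omega : n ≠ 0)
  have h2 : ∑ j ∈ Finset.range (n + 1), (-1 : ℝ) ^ j * (n.choose j : ℝ) = 0 := by
    have := congrArg (fun z : ℤ => (z : ℝ)) h
    push_cast at this
    simpa using this
  rw [Finset.sum_range_succ] at h2
  have : (∑ j ∈ Finset.range n, (-1 : ℝ) ^ j * (n.choose j : ℝ)) = -((-1:ℝ)^n * 1) := by
    simp at h2 ⊢
    linarith
  rw [this]
  obtain ⟨k, rfl⟩ := Nat.exists_eq_add_of_le hn
  simp [pow_succ, pow_add]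

/-- Common value of each term with `|S| = j`. -/
noncomputable def Gv (n j : ℕ) : ℝ :=
  ((-1) ^ (n - 1 - j) * (Nat.factorial (n - 1 - j) : ℝ) / ((n : ℝ) - 1) ^ (n - 1 - j)) *
    (((n - 1).descFactorial j * (n - 1) ^ (n - j) : ℕ) : ℝ)

end PigeonAux

/-- E[D] = (n-2)!/(n-1)^{n-2} over a uniform assignment of
n pigeons to n-1 holes. -/
theorem stmt5 (n : ℕ) (hn : 2 ≤ n) :
    (∑ x : Fin n → Fin (n - 1), Dfun n x) / ((n : ℝ) - 1) ^ n =
      (Nat.factorial (n - 2) : ℝ) / ((n : ℝ) - 1) ^ (n - 2) := by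
  classical
  have hmr : ((n : ℝ) - 1) = ((n - 1 : ℕ) : ℝ) := by
    have : (1:ℕ) ≤ n := by omega
    push_cast [Nat.cast_sub this]; ring
  have hm0 : ((n - 1 : ℕ) : ℝ) ≠ 0 := by
    have : 1 ≤ n - 1 := by omega
    positivity
  -- Step 1: swap sums
  have h1 : (∑ x : Fin n → Fin (n - 1), Dfun n x) =
      ∑ S ∈ Finset.univ.filter (fun S : Finset (Fin n) => S ≠ Finset.univ),
        cCoef n S * ∑ x : Fin n → Fin (n - 1), Jind n S x := by
    unfold Dfun
    rw [Finset.sum_comm]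
    exact Finset.sum_congr rfl fun S _ => (Finset.mul_sum _ _ _).symm
  rw [h1]
  -- Step 2: drop the filter (univ term vanishes)
  have hdesc0 : (n - 1).descFactorial n = 0 :=
    Nat.descFactorial_eq_zero_iff_lt.2 (by omega)
  have h2 : ∑ S ∈ Finset.univ.filter (fun S : Finset (Fin n) => S ≠ Finset.univ),
        cCoef n S * ∑ x : Fin n → Fin (n - 1), Jind n S x
      = ∑ S : Finset (Fin n), cCoef n S * ∑ x : Fin n → Fin (n - 1), Jind n S x := by
    rw [Finset.filter_ne']
    refine Finset.sum_erase _ ?_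
    rw [sumJ]
    simp [Finset.card_univ, hdesc0]
  rw [h2]
  -- Step 3: rewrite each term as Gv n S.card and group by cardinality
  have h3 : ∑ S : Finset (Fin n), cCoef n S * ∑ x : Fin n → Fin (n - 1), Jind n S x
      = ∑ j ∈ Finset.range (n + 1), (n.choose j) • Gv n j := by
    have : ∀ S : Finset (Fin n), cCoef n S * (∑ x : Fin n → Fin (n - 1), Jind n S x) = Gv n S.card := by
      intro S; rw [sumJ]; rfl
    simp_rw [this]
    rw [show (Finset.univ : Finset (Finset (Fin n))) = Finset.univ.powerset by
      rw [Finset.powerset_univ]]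
    rw [Finset.sum_powerset]
    simp only [Finset.card_univ, Fintype.card_fin]
    exact Finset.sum_congr rfl fun j _ => Finset.sum_powersetCard j Finset.univ (Gv n)
      |>.trans (by simp [Finset.card_univ])
  rw [h3]
  -- Step 4: last term vanishes
  rw [Finset.sum_range_succ]
  have hGn : Gv n n = 0 := by
    unfold Gv
    simp [hdesc0]
  rw [hGn]
  -- Step 5: evaluate Gv for j < n
  have h5 : ∀ j ∈ Finset.range n, (n.choose j) • Gv n j
      = ((Nat.factorial (n-1) : ℝ) * ((n-1:ℕ):ℝ) * (-1)^(n-1)) * ((-1)^j * (n.choose j : ℝ)) := by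
    intro j hj
    rw [Finset.mem_range] at hj
    have hjm : j ≤ n - 1 := by omega
    have hfac : (n - 1 - j).factorial * (n-1).descFactorial j = (n-1).factorial :=
      Nat.factorial_mul_descFactorial hjm
    have hpow : (n - j) = (n - 1 - j) + 1 := by omega
    have hsign : ((-1:ℝ)) ^ (n - 1 - j) = (-1)^(n-1) * (-1)^j := by
      have h' : (n - 1) + j = (n - 1 - j) + 2 * j := by omega
      have := congrArg (fun t => (-1:ℝ) ^ t) h'
      simp only [pow_add, pow_mul, neg_one_sq, one_pow, mul_one] at this
      rw [← this]
    have hfacR : ((n - 1 - j).factorial : ℝ) * ((n-1).descFactorial j : ℝ) = ((n-1).factorial : ℝ) := by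
      exact_mod_cast hfac
    have hG : Gv n j = (-1:ℝ)^(n-1-j) * (((n - 1 - j).factorial : ℝ) * ((n-1).descFactorial j : ℝ)) * ((n-1:ℕ):ℝ) := by
      have h0 : ((n:ℝ) - 1) ≠ 0 := by rw [hmr]; exact hm0
      have hP : ((n:ℝ) - 1) ^ (n - 1 - j) ≠ 0 := pow_ne_zero _ h0
      unfold Gv
      rw [hmr, hpow]
      push_cast
      rw [pow_succ]
      field_simp
    rw [hG, hfacR, hsign, nsmul_eq_mul]
    ring
  rw [Finset.sum_congr rfl h5, ← Finset.mul_sum, altsum n (by omega), smul_zero, add_zero]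
  have hsq : ((-1:ℝ)^(n-1)) * ((-1:ℝ)^(n-1)) = 1 := by
    rw [← pow_add, ← two_mul, pow_mul]
    norm_num
  have hC : ((Nat.factorial (n-1) : ℝ) * ((n-1:ℕ):ℝ) * (-1)^(n-1)) * (-1)^(n-1)
      = (Nat.factorial (n-1) : ℝ) * ((n-1:ℕ):ℝ) := by
    rw [mul_assoc, hsq, mul_one]
  rw [hC]
  have hfact : ((n-1).factorial : ℕ) = (n-1) * (n-2).factorial := by
    have h : n - 1 = (n - 2) + 1 := by omega
    rw [h, Nat.factorial_succ, ← h]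
  have hcast : ((n-1).factorial : ℝ) = ((n-1:ℕ):ℝ) * ((n-2).factorial : ℝ) := by
    rw [hfact]; push_cast; ring
  have hpown : ((n:ℝ) - 1)^n = ((n-1:ℕ):ℝ)^(n-2) * ((n-1:ℕ):ℝ)^2 := by
    rw [hmr, ← pow_add]
    congr 1
    omega
  rw [hcast, hpown, hmr]
  rw [div_eq_div_iff (by exact mul_ne_zero (pow_ne_zero _ hm0) (pow_ne_zero _ hm0)) (pow_ne_zero _ hm0)]
  ring
end

section
/- For n ≥ 2, the second moment E[D²] of D = ∑_{S ⊊ [n]} c_S J_S over a uniform assignment of n pigeons to n-1 holes equals ((n-2)!/(n-1)^{n-2}) · n! · ∑_{c=0}^{n-1} ((-1)^{n-1-c}/(n-c)) · 1/((n-1)^{n-1-c} · c!). -/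
set_option maxRecDepth 4000

open Finset

open Finset

/-- Half-predicate: x is injective on S and avoids P on S. -/
def halfP {α : Type*} {m : ℕ} (S : Finset α) (P : Finset (Fin m)) (x : α → Fin m) : Prop :=
  Set.InjOn x ↑S ∧ ∀ i ∈ S, x i ∉ P

lemma halfP_skip {α : Type*} [DecidableEq α] {m : ℕ} (a : α) (S : Finset α)
    (P : Finset (Fin m)) (x : α → Fin m) (ha : a ∉ S) :
    halfP S P x ↔ halfP (S.subtype (· ≠ a)) P (fun j => x ↑j) := by
  unfold halfP
  constructor
  · rintro ⟨h1, h2⟩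
    refine ⟨?_, ?_⟩
    · intro i hi j hj e
      have hi' : (i : α) ∈ S := by
        have := Finset.mem_coe.mp hi; simpa [Finset.mem_subtype] using this
      have hj' : (j : α) ∈ S := by
        have := Finset.mem_coe.mp hj; simpa [Finset.mem_subtype] using this
      exact Subtype.ext (h1 hi' hj' e)
    · intro i hi
      exact h2 _ (by simpa [Finset.mem_subtype] using hi)
  · rintro ⟨h1, h2⟩
    refine ⟨?_, ?_⟩
    · intro i hi j hj e
      have hia : i ≠ a := fun h => ha (h ▸ hi)
      have hja : j ≠ a := fun h => ha (h ▸ hj)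
      have : (⟨i, hia⟩ : {j // j ≠ a}) = ⟨j, hja⟩ :=
        h1 (by simpa [Finset.mem_subtype] using hi) (by simpa [Finset.mem_subtype] using hj) e
      exact congrArg Subtype.val this
    · intro i hi
      have hia : i ≠ a := fun h => ha (h ▸ hi)
      exact h2 ⟨i, hia⟩ (Finset.mem_subtype.mpr hi)

lemma halfP_peel {α : Type*} [DecidableEq α] {m : ℕ} (a : α) (S : Finset α)
    (P : Finset (Fin m)) (x : α → Fin m) (ha : a ∈ S) :
    halfP S P x ↔ x a ∉ P ∧ halfP (S.subtype (· ≠ a)) (insert (x a) P) (fun j => x ↑j) := by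
  unfold halfP
  constructor
  · rintro ⟨h1, h2⟩
    refine ⟨h2 a ha, ?_, ?_⟩
    · intro i hi j hj e
      have hi' : (i : α) ∈ S := by
        have := Finset.mem_coe.mp hi; simpa [Finset.mem_subtype] using this
      have hj' : (j : α) ∈ S := by
        have := Finset.mem_coe.mp hj; simpa [Finset.mem_subtype] using this
      exact Subtype.ext (h1 hi' hj' e)
    · intro i hi
      have hi' : (i : α) ∈ S := by simpa [Finset.mem_subtype] using hi
      intro hmem
      rcases Finset.mem_insert.mp hmem with h | h
      · exact i.2 (h1 hi' ha h)
      · exact h2 _ hi' h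
  · rintro ⟨hxa, h1, h2⟩
    refine ⟨?_, ?_⟩
    · intro i hi j hj e
      by_cases hia : i = a
      · by_cases hja : j = a
        · rw [hia, hja]
        · exfalso
          have := h2 ⟨j, hja⟩ (Finset.mem_subtype.mpr (Finset.mem_coe.mp hj))
          exact this (by simp [← e, hia])
      · by_cases hja : j = a
        · exfalso
          have := h2 ⟨i, hia⟩ (Finset.mem_subtype.mpr (Finset.mem_coe.mp hi))
          exact this (by simp [e, hja])
        · exact congrArg Subtype.val
            (h1 (Finset.mem_coe.mpr ((Finset.mem_subtype (a := ⟨i, hia⟩)).mpr (Finset.mem_coe.mp hi)))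
                (Finset.mem_coe.mpr ((Finset.mem_subtype (a := ⟨j, hja⟩)).mpr (Finset.mem_coe.mp hj))) e)
    · intro i hi
      by_cases hia : i = a
      · rw [hia]; exact hxa
      · have := h2 ⟨i, hia⟩ (Finset.mem_subtype.mpr hi)
        exact fun h => this (Finset.mem_insert_of_mem h)

lemma halfP_empty {α : Type*} {m : ℕ} (P : Finset (Fin m)) (x : α → Fin m) :
    halfP (∅ : Finset α) P x := by
  constructor
  · intro i hi; simp at hi
  · intro i hi; simp at hi

lemma descF_peel (M k : ℕ) : M.descFactorial (k + 1) = M * (M - 1).descFactorial k := by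
  cases M with
  | zero => simp [Nat.zero_descFactorial_succ]
  | succ M => rw [Nat.succ_descFactorial_succ]; simp

lemma card_ne_subtype {α : Type*} [Fintype α] [DecidableEq α] (a : α) :
    Fintype.card {j // j ≠ a} = Fintype.card α - 1 := by
  simp [Fintype.card_subtype_compl]

lemma subtype_ne_card {α : Type*} [DecidableEq α] (S : Finset α) (a : α) (ha : a ∉ S) :
    (S.subtype (· ≠ a)).card = S.card := by
  rw [Finset.card_subtype, Finset.filter_ne', Finset.erase_eq_of_notMem ha]

lemma subtype_ne_card' {α : Type*} [DecidableEq α] (S : Finset α) (a : α) (ha : a ∈ S) :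
    (S.subtype (· ≠ a)).card = S.card - 1 := by
  rw [Finset.card_subtype, Finset.filter_ne', Finset.card_erase_of_mem ha]

lemma subtype_ne_disjoint {α : Type*} [DecidableEq α] {S T : Finset α} (a : α)
    (h : Disjoint S T) : Disjoint (S.subtype (· ≠ a)) (T.subtype (· ≠ a)) := by
  rw [Finset.disjoint_left] at h ⊢
  intro i hi hj
  exact h (Finset.mem_subtype.mp hi) (Finset.mem_subtype.mp hj)

lemma card_filter_prod {M Y : Type*} [Fintype M] [Fintype Y] (q : M × Y → Prop)
    [DecidablePred q] :
    (univ.filter q).card = ∑ v : M, (univ.filter (fun y : Y => q (v, y))).card := by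
  rw [Finset.card_filter, Fintype.sum_prod_type]
  exact Finset.sum_congr rfl fun v _ => (Finset.card_filter _ _).symm

lemma natcard_equiv {β γ : Type*} (e : β ≃ γ) (p : β → Prop) :
    Nat.card {x : β // p x} = Nat.card {z : γ // p (e.symm z)} :=
  Nat.card_congr (Equiv.subtypeEquiv e (fun x => by rw [Equiv.symm_apply_apply]))

lemma natcard_prod_sum {M Y : Type*} [Fintype M] [Fintype Y] (q : M × Y → Prop) :
    Nat.card {z : M × Y // q z} = ∑ v : M, Nat.card {y : Y // q (v, y)} := by
  classical
  rw [Nat.card_eq_fintype_card, Fintype.card_subtype, card_filter_prod]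
  exact Finset.sum_congr rfl fun v _ => by rw [Nat.card_eq_fintype_card, Fintype.card_subtype]

lemma natcard_iff {β : Type*} {q q' : β → Prop} (h : ∀ z, q z ↔ q' z) :
    Nat.card {z : β // q z} = Nat.card {z : β // q' z} :=
  Nat.card_congr (Equiv.subtypeEquivRight h)

lemma natcard_false {β : Type*} {q : β → Prop} (h : ∀ z, ¬ q z) :
    Nat.card {z : β // q z} = 0 := by
  have : IsEmpty {z : β // q z} := ⟨fun z => h z.1 z.2⟩
  exact Nat.card_of_isEmpty

lemma natcard_true {β : Type*} {q : β → Prop} (h : ∀ z, q z) :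
    Nat.card {z : β // q z} = Nat.card β :=
  Nat.card_congr (Equiv.subtypeUnivEquiv h)

lemma natcard_fun {α : Type*} [Fintype α] [DecidableEq α] (m : ℕ) :
    Nat.card (α → Fin m) = m ^ Fintype.card α := by
  rw [Nat.card_eq_fintype_card, Fintype.card_fun, Fintype.card_fin]

lemma peel_arith (M c K k : ℕ) (hc : 1 ≤ c) :
    M * ((M - 1).descFactorial (c - 1) * K ^ (k - 1 - (c - 1))) =
      M.descFactorial c * K ^ (k - c) := by
  obtain ⟨c', rfl⟩ : ∃ c', c = c' + 1 := ⟨c - 1, by omega⟩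
  rw [descF_peel]
  simp only [Nat.add_sub_cancel]
  rw [show k - 1 - c' = k - (c' + 1) by omega]
  ring

lemma count_main (m : ℕ) (N : ℕ) : ∀ (α : Type) [Fintype α] [DecidableEq α]
    (A B C : Finset α) (P Q : Finset (Fin m)),
    Disjoint A B → Disjoint A C → Disjoint B C → Q ⊆ P →
    A.card + B.card + C.card = N →
    Nat.card {x : α → Fin m // halfP (A ∪ B) P x ∧ halfP (A ∪ C) Q x}
      = (m - P.card).descFactorial A.card
        * (m - P.card - A.card).descFactorial B.card
        * (m - Q.card - A.card).descFactorial C.card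
        * m ^ (Fintype.card α - A.card - B.card - C.card) := by
  induction N using Nat.strong_induction_on with
  | _ N IH =>
  intro α _ _ A B C P Q hAB hAC hBC hQP hN
  have hsub : ∀ (S T : Finset α) (a : α),
      (S ∪ T).subtype (· ≠ a) = S.subtype (· ≠ a) ∪ T.subtype (· ≠ a) := by
    intro S T a; ext i; simp [Finset.mem_subtype]
  rcases A.eq_empty_or_nonempty with hA | ⟨a, ha⟩
  · rcases B.eq_empty_or_nonempty with hB | ⟨b, hb⟩
    · rcases C.eq_empty_or_nonempty with hC | ⟨c0, hc0⟩
      · -- base case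
        subst hA; subst hB; subst hC
        rw [natcard_true (fun x => ⟨halfP_empty P x, halfP_empty Q x⟩), natcard_fun]
        simp
      · -- peel an element of C
        subst hA; subst hB
        set C' := C.subtype (· ≠ c0) with hC'
        have hkey : ∀ (v : Fin m) (y : {j // j ≠ c0} → Fin m),
            ((fun x : α → Fin m => halfP (∅ ∪ ∅) P x ∧ halfP (∅ ∪ C) Q x)
              ((Equiv.funSplitAt c0 (Fin m)).symm (v, y)))
            ↔ v ∉ Q ∧ (halfP ((∅ : Finset {j // j ≠ c0}) ∪ ∅) (insert v Q) y
                ∧ halfP (∅ ∪ C') (insert v Q) y) := by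
          intro v y
          set x := (Equiv.funSplitAt c0 (Fin m)).symm (v, y) with hx
          have hxa : x c0 = v := by simp [hx, Equiv.funSplitAt_symm_apply]
          have hyy : (fun j : {j // j ≠ c0} => x ↑j) = y := by
            funext j; simp [hx, Equiv.funSplitAt_symm_apply, j.2]
          simp only [Finset.empty_union]
          rw [halfP_peel c0 C Q x hc0, hyy, hxa]
          constructor
          · rintro ⟨-, h1, h2⟩; exact ⟨h1, halfP_empty _ _, h2⟩
          · rintro ⟨h1, -, h2⟩; exact ⟨halfP_empty _ _, h1, h2⟩
        refine Eq.trans (natcard_equiv (Equiv.funSplitAt c0 (Fin m)) _)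
          (Eq.trans (natcard_prod_sum _) ?_)
        have hCpos : 1 ≤ C.card := Finset.card_pos.mpr ⟨c0, hc0⟩
        trans (∑ v : Fin m, if v ∉ Q then
            ((m - (Q.card + 1)).descFactorial 0
              * (m - (Q.card + 1) - 0).descFactorial 0
              * (m - (Q.card + 1) - 0).descFactorial (C.card - 1)
              * m ^ (Fintype.card {j // j ≠ c0} - 0 - 0 - (C.card - 1))) else 0)
        · refine Finset.sum_congr rfl fun v _ => ?_
          by_cases hv : v ∈ Q
          · rw [if_neg (by simpa using hv), natcard_false]
            intro y hy
            exact ((hkey v y).mp hy).1 hv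
          · rw [if_pos hv]
            refine Eq.trans (natcard_iff (q' := fun y =>
                halfP ((∅ : Finset {j // j ≠ c0}) ∪ ∅) (insert v Q) y ∧
                  halfP (∅ ∪ C') (insert v Q) y) (fun y => ?_)) ?_
            · exact Iff.intro (fun h => ((hkey v y).mp h).2) (fun h => (hkey v y).mpr ⟨hv, h⟩)
            · rw [IH (N - 1) (by omega) _ ∅ ∅ C' (insert v Q) (insert v Q)
                (by simp) (by simp) (by simp) subset_rfl ?_]
              · rw [Finset.card_insert_of_notMem hv]
                simp [hC', subtype_ne_card' C c0 hc0]
              · have h5 : C.card = N := by simpa using hN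
                simp only [Finset.card_empty, hC', subtype_ne_card' C c0 hc0]
                omega
        · rw [Finset.sum_ite, Finset.sum_const, Finset.sum_const_zero, add_zero,
            smul_eq_mul]
          have hcard : (univ.filter (fun v : Fin m => v ∉ Q)).card = m - Q.card := by
            have : univ.filter (fun v : Fin m => v ∉ Q) = Qᶜ := by ext v; simp
            rw [this, Finset.card_compl, Fintype.card_fin]
          rw [hcard]
          simp only [Finset.card_empty, Nat.descFactorial_zero, Nat.sub_zero, card_ne_subtype]
          have e1 : m - (Q.card + 1) = m - Q.card - 1 := by omega
          rw [e1, mul_one, one_mul, one_mul]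
          exact peel_arith (m - Q.card) C.card m (Fintype.card α) hCpos
    · -- peel an element of B
      subst hA
      set B' := B.subtype (· ≠ b) with hB'
      set C' := C.subtype (· ≠ b) with hC'
      have hbC : b ∉ C := Finset.disjoint_left.mp hBC hb
      have hkey : ∀ (v : Fin m) (y : {j // j ≠ b} → Fin m),
          ((fun x : α → Fin m => halfP (∅ ∪ B) P x ∧ halfP (∅ ∪ C) Q x)
            ((Equiv.funSplitAt b (Fin m)).symm (v, y)))
          ↔ v ∉ P ∧ (halfP ((∅ : Finset {j // j ≠ b}) ∪ B') (insert v P) y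
              ∧ halfP (∅ ∪ C') Q y) := by
        intro v y
        set x := (Equiv.funSplitAt b (Fin m)).symm (v, y) with hx
        have hxa : x b = v := by simp [hx, Equiv.funSplitAt_symm_apply]
        have hyy : (fun j : {j // j ≠ b} => x ↑j) = y := by
          funext j; simp [hx, Equiv.funSplitAt_symm_apply, j.2]
        simp only [Finset.empty_union]
        rw [halfP_peel b B P x hb, halfP_skip b C Q x hbC, hyy, hxa]
        tauto
      refine Eq.trans (natcard_equiv (Equiv.funSplitAt b (Fin m)) _)
        (Eq.trans (natcard_prod_sum _) ?_)
      have hBpos : 1 ≤ B.card := Finset.card_pos.mpr ⟨b, hb⟩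
      trans (∑ v : Fin m, if v ∉ P then
          ((m - (P.card + 1)).descFactorial 0
            * (m - (P.card + 1) - 0).descFactorial (B.card - 1)
            * (m - Q.card - 0).descFactorial C.card
            * m ^ (Fintype.card {j // j ≠ b} - 0 - (B.card - 1) - C.card)) else 0)
      · refine Finset.sum_congr rfl fun v _ => ?_
        by_cases hv : v ∈ P
        · rw [if_neg (by simpa using hv), natcard_false]
          intro y hy
          exact ((hkey v y).mp hy).1 hv
        · rw [if_pos hv]
          refine Eq.trans (natcard_iff (q' := fun y =>
              halfP ((∅ : Finset {j // j ≠ b}) ∪ B') (insert v P) y ∧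
                halfP (∅ ∪ C') Q y) (fun y => ?_)) ?_
          · exact Iff.intro (fun h => ((hkey v y).mp h).2) (fun h => (hkey v y).mpr ⟨hv, h⟩)
          · rw [IH (N - 1) (by omega) _ ∅ B' C' (insert v P) Q
              (by simp) (by simp) (subtype_ne_disjoint b hBC)
              (hQP.trans (Finset.subset_insert _ _)) ?_]
            · rw [Finset.card_insert_of_notMem hv]
              simp [hB', hC', subtype_ne_card' B b hb, subtype_ne_card C b hbC]
            · have h5 : B.card + C.card = N := by simpa using hN
              simp only [Finset.card_empty, hB', hC', subtype_ne_card' B b hb,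
                subtype_ne_card C b hbC]
              omega
      · rw [Finset.sum_ite, Finset.sum_const, Finset.sum_const_zero, add_zero,
          smul_eq_mul]
        have hcard : (univ.filter (fun v : Fin m => v ∉ P)).card = m - P.card := by
          have : univ.filter (fun v : Fin m => v ∉ P) = Pᶜ := by ext v; simp
          rw [this, Finset.card_compl, Fintype.card_fin]
        rw [hcard]
        simp only [Finset.card_empty, Nat.descFactorial_zero, Nat.sub_zero, card_ne_subtype]
        have e1 : m - (P.card + 1) = m - P.card - 1 := by omega
        rw [e1, one_mul, one_mul]
        obtain ⟨B0, hB0⟩ : ∃ B0, B.card = B0 + 1 := ⟨B.card - 1, by omega⟩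
        rw [hB0]
        simp only [Nat.add_sub_cancel]
        rw [descF_peel (m - P.card) B0]
        rw [show Fintype.card α - 1 - B0 - C.card = Fintype.card α - (B0 + 1) - C.card
          from by omega]
        ring
  · -- peel an element of A
    set A' := A.subtype (· ≠ a) with hA'
    set B' := B.subtype (· ≠ a) with hB'
    set C' := C.subtype (· ≠ a) with hC'
    have hkey : ∀ (v : Fin m) (y : {j // j ≠ a} → Fin m),
        ((fun x : α → Fin m => halfP (A ∪ B) P x ∧ halfP (A ∪ C) Q x)
          ((Equiv.funSplitAt a (Fin m)).symm (v, y)))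
        ↔ v ∉ P ∧ (halfP (A' ∪ B') (insert v P) y ∧ halfP (A' ∪ C') (insert v Q) y) := by
      intro v y
      set x := (Equiv.funSplitAt a (Fin m)).symm (v, y) with hx
      have hxa : x a = v := by simp [hx, Equiv.funSplitAt_symm_apply]
      have hyy : (fun j : {j // j ≠ a} => x ↑j) = y := by
        funext j; simp [hx, Equiv.funSplitAt_symm_apply, j.2]
      show (halfP (A ∪ B) P x ∧ halfP (A ∪ C) Q x) ↔ _
      rw [halfP_peel a (A ∪ B) P x (Finset.mem_union_left _ ha),
        halfP_peel a (A ∪ C) Q x (Finset.mem_union_left _ ha), hsub, hsub, hyy, hxa]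
      constructor
      · rintro ⟨⟨h1, h2⟩, ⟨h3, h4⟩⟩; exact ⟨h1, h2, h4⟩
      · rintro ⟨h1, h2, h4⟩; exact ⟨⟨h1, h2⟩, ⟨fun hq => h1 (hQP hq), h4⟩⟩
    refine Eq.trans (natcard_equiv (Equiv.funSplitAt a (Fin m)) _)
      (Eq.trans (natcard_prod_sum _) ?_)
    have hApos : 1 ≤ A.card := Finset.card_pos.mpr ⟨a, ha⟩
    have haB : a ∉ B := Finset.disjoint_left.mp hAB ha
    have haC : a ∉ C := Finset.disjoint_left.mp hAC ha
    trans (∑ v : Fin m, if v ∉ P then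
        ((m - (P.card + 1)).descFactorial (A.card - 1)
          * (m - (P.card + 1) - (A.card - 1)).descFactorial B.card
          * (m - (Q.card + 1) - (A.card - 1)).descFactorial C.card
          * m ^ (Fintype.card {j // j ≠ a} - (A.card - 1) - B.card - C.card)) else 0)
    · refine Finset.sum_congr rfl fun v _ => ?_
      by_cases hv : v ∈ P
      · rw [if_neg (by simpa using hv), natcard_false]
        intro y hy
        exact ((hkey v y).mp hy).1 hv
      · rw [if_pos hv]
        have hvQ : v ∉ Q := fun h => hv (hQP h)
        refine Eq.trans (natcard_iff (q' := fun y =>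
            halfP (A' ∪ B') (insert v P) y ∧ halfP (A' ∪ C') (insert v Q) y)
            (fun y => ?_)) ?_
        · exact Iff.intro (fun h => ((hkey v y).mp h).2) (fun h => (hkey v y).mpr ⟨hv, h⟩)
        · rw [IH (N - 1) (by omega) _ A' B' C' (insert v P) (insert v Q)
            (subtype_ne_disjoint a hAB) (subtype_ne_disjoint a hAC)
            (subtype_ne_disjoint a hBC) (Finset.insert_subset_insert _ hQP) ?_]
          · rw [Finset.card_insert_of_notMem hv, Finset.card_insert_of_notMem hvQ]
            simp [hA', hB', hC', subtype_ne_card' A a ha, subtype_ne_card B a haB,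
              subtype_ne_card C a haC]
          · have h5 : A.card + B.card + C.card = N := hN
            simp only [hA', hB', hC', subtype_ne_card' A a ha, subtype_ne_card B a haB,
              subtype_ne_card C a haC]
            omega
    · rw [Finset.sum_ite, Finset.sum_const, Finset.sum_const_zero, add_zero,
        smul_eq_mul]
      have hcard : (univ.filter (fun v : Fin m => v ∉ P)).card = m - P.card := by
        have : univ.filter (fun v : Fin m => v ∉ P) = Pᶜ := by ext v; simp
        rw [this, Finset.card_compl, Fintype.card_fin]
      rw [hcard]
      simp only [card_ne_subtype]
      have e1 : m - (P.card + 1) = m - P.card - 1 := by omega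
      have e2 : m - (Q.card + 1) = m - Q.card - 1 := by omega
      rw [e1, e2]
      obtain ⟨A0, hA0⟩ : ∃ A0, A.card = A0 + 1 := ⟨A.card - 1, by omega⟩
      rw [hA0]
      simp only [Nat.add_sub_cancel]
      rw [descF_peel (m - P.card) A0]
      rw [show m - P.card - 1 - A0 = m - P.card - (A0 + 1) from by omega]
      rw [show m - Q.card - 1 - A0 = m - Q.card - (A0 + 1) from by omega]
      rw [show Fintype.card α - 1 - A0 - B.card - C.card
          = Fintype.card α - (A0 + 1) - B.card - C.card from by omega]
      ring

-- ================= Part B =================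

lemma pow_sub_div {x : ℝ} (hx : x ≠ 0) {p q : ℕ} (h : p ≤ q) :
    x ^ (q - p) = x ^ q / x ^ p := by
  rw [eq_div_iff (pow_ne_zero _ hx), ← pow_add]
  congr 1
  omega

lemma neg_one_pow_sub {k n : ℕ} (h : k ≤ n) : ((-1 : ℝ)) ^ (n - k) = (-1) ^ n * (-1) ^ k := by
  have h2 : ((-1 : ℝ)) ^ k * (-1) ^ k = 1 := by
    rw [← pow_add]; exact Even.neg_one_pow ⟨k, rfl⟩
  calc ((-1 : ℝ)) ^ (n - k) = (-1) ^ (n - k) * ((-1) ^ k * (-1) ^ k) := by rw [h2, mul_one]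
    _ = ((-1) ^ ((n - k) + k)) * (-1) ^ k := by rw [pow_add]; ring
    _ = (-1) ^ n * (-1) ^ k := by rw [Nat.sub_add_cancel h]

lemma sum_Jind (n : ℕ) (S T : Finset (Fin n)) :
    ∑ x : Fin n → Fin (n - 1), Jind n S x * Jind n T x
      = (Nat.card {x : Fin n → Fin (n - 1) //
          halfP S (∅ : Finset (Fin (n - 1))) x ∧ halfP T ∅ x} : ℝ) := by
  classical
  have hh : ∀ (U : Finset (Fin n)) (x : Fin n → Fin (n - 1)),
      halfP U (∅ : Finset (Fin (n - 1))) x ↔ Set.InjOn x ↑U := by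
    intro U x; unfold halfP; simp
  have h1 : ∀ x : Fin n → Fin (n - 1), Jind n S x * Jind n T x
      = if (halfP S (∅ : Finset (Fin (n - 1))) x ∧ halfP T ∅ x) then (1 : ℝ) else 0 := by
    intro x
    by_cases hS : Set.InjOn x ↑S <;> by_cases hT : Set.InjOn x ↑T <;>
      simp [Jind, hS, hT, hh]
  rw [Finset.sum_congr rfl (fun x _ => h1 x), Finset.sum_boole]
  congr 1
  rw [Nat.card_eq_fintype_card, Fintype.card_subtype]

lemma count_ST (n : ℕ) (S T : Finset (Fin n)) :
    Nat.card {x : Fin n → Fin (n - 1) //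
        halfP S (∅ : Finset (Fin (n - 1))) x ∧ halfP T ∅ x}
      = (n - 1).descFactorial (S ∩ T).card
        * ((n - 1) - (S ∩ T).card).descFactorial ((S \ T).card)
        * ((n - 1) - (S ∩ T).card).descFactorial ((T \ S).card)
        * (n - 1) ^ (n - (S ∩ T).card - (S \ T).card - (T \ S).card) := by
  classical
  have hS : (S ∩ T) ∪ (S \ T) = S := by ext a; simp; tauto
  have hT : (S ∩ T) ∪ (T \ S) = T := by ext a; simp; tauto
  have hd1 : Disjoint (S ∩ T) (S \ T) := by
    rw [Finset.disjoint_left]; intro a h1 h2; simp at h1 h2; tauto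
  have hd2 : Disjoint (S ∩ T) (T \ S) := by
    rw [Finset.disjoint_left]; intro a h1 h2; simp at h1 h2; tauto
  have hd3 : Disjoint (S \ T) (T \ S) := by
    rw [Finset.disjoint_left]; intro a h1 h2; simp at h1 h2; tauto
  have h := count_main (n - 1) ((S ∩ T).card + (S \ T).card + (T \ S).card) (Fin n)
    (S ∩ T) (S \ T) (T \ S) ∅ ∅ hd1 hd2 hd3 subset_rfl rfl
  rw [hS, hT] at h
  simpa [Fintype.card_fin] using h

lemma step2_real (x Fm Fma Fmb Fmc : ℝ) (hx : x ≠ 0) (hFma : Fma ≠ 0) (hFmb : Fmb ≠ 0)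
    (m c i j nn a b : ℕ) (hia : c + i = a) (hjb : c + j = b) (ha : a ≤ m) (hb : b ≤ m)
    (hn : c + i + j ≤ nn) :
    ((-1) ^ (m - a) * Fma / x ^ (m - a)) * ((-1) ^ (m - b) * Fmb / x ^ (m - b)) *
      ((Fm / Fma) * (Fmc / Fmb) * x ^ (nn - (c + i + j)))
    = (-1) ^ a * (-1) ^ b * (Fm * x ^ nn / x ^ (2 * m)) * (Fmc * x ^ c) := by
  subst hia; subst hjb
  rw [neg_one_pow_sub ha, neg_one_pow_sub hb, pow_sub_div hx ha, pow_sub_div hx hb,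
    pow_sub_div hx hn, show 2 * m = m + m from by ring, pow_add]
  have hs : ((-1 : ℝ)) ^ m * (-1) ^ m = 1 := by rw [← pow_add]; exact Even.neg_one_pow ⟨m, rfl⟩
  field_simp
  ring_nf
  rw [show ((-1 : ℝ)) ^ (m * 2) = 1 from by rw [mul_comm, pow_mul]; simp]
  ring

lemma term_eq (n : ℕ) (hn : 2 ≤ n) (S T : Finset (Fin n)) (hS : S ≠ Finset.univ)
    (hT : T ≠ Finset.univ) :
    cCoef n S * cCoef n T *
      (((n - 1).descFactorial (S ∩ T).card
        * ((n - 1) - (S ∩ T).card).descFactorial ((S \ T).card)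
        * ((n - 1) - (S ∩ T).card).descFactorial ((T \ S).card)
        * (n - 1) ^ (n - (S ∩ T).card - (S \ T).card - (T \ S).card) : ℕ) : ℝ)
    = (-1) ^ S.card * (-1) ^ T.card
      * (((n - 1).factorial : ℝ) * ((n : ℝ) - 1) ^ n / ((n : ℝ) - 1) ^ (2 * (n - 1)))
      * (((n - 1 - (S ∩ T).card).factorial : ℝ) * ((n : ℝ) - 1) ^ (S ∩ T).card) := by
  have hn1 : (1 : ℕ) ≤ n := by omega
  have hxm : (((n - 1 : ℕ)) : ℝ) = (n : ℝ) - 1 := by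
    rw [Nat.cast_sub hn1, Nat.cast_one]
  have hx0 : ((n : ℝ) - 1) ≠ 0 := by
    rw [← hxm]; exact Nat.cast_ne_zero.mpr (by omega)
  have hci : (S ∩ T).card + (S \ T).card = S.card := Finset.card_inter_add_card_sdiff S T
  have hcj : (S ∩ T).card + (T \ S).card = T.card := by
    have := Finset.card_inter_add_card_sdiff T S
    rwa [Finset.inter_comm] at this
  have hSn : S.card ≤ n - 1 := by
    have h1 : S.card ≤ n := by simpa using Finset.card_le_univ S
    have h2 : S.card ≠ n := fun h => hS (Finset.eq_univ_of_card S (by simpa using h))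
    omega
  have hTn : T.card ≤ n - 1 := by
    have h1 : T.card ≤ n := by simpa using Finset.card_le_univ T
    have h2 : T.card ≠ n := fun h => hT (Finset.eq_univ_of_card T (by simpa using h))
    omega
  have hun : (S ∩ T).card + (S \ T).card + (T \ S).card ≤ n := by
    have h1 := Finset.card_union_add_card_inter S T
    have h2 : (S ∪ T).card ≤ n := by simpa using Finset.card_le_univ (S ∪ T)
    omega
  -- rewrite the natural-number count
  have hD1 : (n - 1).descFactorial (S ∩ T).card
      * ((n - 1) - (S ∩ T).card).descFactorial ((S \ T).card)
      = (n - 1).descFactorial S.card := by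
    have := Nat.descFactorial_mul_descFactorial
      (k := (S ∩ T).card) (m := S.card) (n := n - 1) (by omega)
    rw [show S.card - (S ∩ T).card = (S \ T).card from by omega] at this
    rw [mul_comm] at this
    exact this
  have hD2 : ((n - 1).descFactorial S.card : ℝ)
      = ((n - 1).factorial : ℝ) / (((n - 1) - S.card).factorial : ℝ) := by
    have := Nat.factorial_mul_descFactorial hSn
    rw [eq_div_iff (by exact_mod_cast Nat.factorial_ne_zero _), mul_comm]
    exact_mod_cast congrArg (Nat.cast : ℕ → ℝ) this
  have hjmc : (T \ S).card ≤ (n - 1) - (S ∩ T).card := by omega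
  have hD3 : (((n - 1) - (S ∩ T).card).descFactorial ((T \ S).card) : ℝ)
      = ((((n - 1) - (S ∩ T).card)).factorial : ℝ) / (((n - 1) - T.card).factorial : ℝ) := by
    have := Nat.factorial_mul_descFactorial hjmc
    rw [show (n - 1) - (S ∩ T).card - (T \ S).card = (n - 1) - T.card from by omega] at this
    rw [eq_div_iff (by exact_mod_cast Nat.factorial_ne_zero _), mul_comm]
    exact_mod_cast congrArg (Nat.cast : ℕ → ℝ) this
  rw [show (n - 1).descFactorial (S ∩ T).card
        * ((n - 1) - (S ∩ T).card).descFactorial ((S \ T).card)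
        * ((n - 1) - (S ∩ T).card).descFactorial ((T \ S).card)
        * (n - 1) ^ (n - (S ∩ T).card - (S \ T).card - (T \ S).card)
      = (n - 1).descFactorial S.card
        * ((n - 1) - (S ∩ T).card).descFactorial ((T \ S).card)
        * (n - 1) ^ (n - ((S ∩ T).card + (S \ T).card + (T \ S).card)) from by
    rw [hD1, show n - (S ∩ T).card - (S \ T).card - (T \ S).card
        = n - ((S ∩ T).card + (S \ T).card + (T \ S).card) from by omega]]
  rw [Nat.cast_mul, Nat.cast_mul, Nat.cast_pow, hxm, hD2, hD3]
  rw [cCoef, cCoef]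
  have key := step2_real ((n : ℝ) - 1) ((n - 1).factorial : ℝ)
    ((n - 1 - S.card).factorial : ℝ) ((n - 1 - T.card).factorial : ℝ)
    ((n - 1 - (S ∩ T).card).factorial : ℝ) hx0
    (by exact_mod_cast Nat.factorial_ne_zero _) (by exact_mod_cast Nat.factorial_ne_zero _)
    (n - 1) (S ∩ T).card (S \ T).card (T \ S).card n S.card T.card
    hci hcj hSn hTn hun
  calc ((-1) ^ (n - 1 - S.card) * ((n - 1 - S.card).factorial : ℝ) /
          ((n : ℝ) - 1) ^ (n - 1 - S.card)) *
        ((-1) ^ (n - 1 - T.card) * ((n - 1 - T.card).factorial : ℝ) /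
          ((n : ℝ) - 1) ^ (n - 1 - T.card)) *
        (((n - 1).factorial : ℝ) / (((n - 1) - S.card).factorial : ℝ) *
          ((((n - 1) - (S ∩ T).card).factorial : ℝ) / (((n - 1) - T.card).factorial : ℝ)) *
          ((n : ℝ) - 1) ^ (n - ((S ∩ T).card + (S \ T).card + (T \ S).card)))
      = (-1) ^ S.card * (-1) ^ T.card *
          (((n - 1).factorial : ℝ) * ((n : ℝ) - 1) ^ n / ((n : ℝ) - 1) ^ (2 * (n - 1))) *
          (((n - 1 - (S ∩ T).card).factorial : ℝ) * ((n : ℝ) - 1) ^ (S ∩ T).card) := key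

lemma sum_vanish (n : ℕ) (T : Finset (Fin n)) (hT : T ≠ Finset.univ) (g : ℕ → ℝ) :
    ∑ S : Finset (Fin n), (-1 : ℝ) ^ S.card * g ((S ∩ T).card) = 0 := by
  obtain ⟨a, ha⟩ : ∃ a, a ∉ T := by
    by_contra h; push_neg at h; exact hT (Finset.eq_univ_iff_forall.mpr h)
  apply Finset.sum_involution (fun S _ => if a ∈ S then S.erase a else insert a S)
  · intro S _
    by_cases hS : a ∈ S
    · simp only [if_pos hS]
      have h1 : (S.erase a) ∩ T = S ∩ T := by
        ext x
        simp only [Finset.mem_inter, Finset.mem_erase]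
        constructor
        · rintro ⟨⟨-, h1⟩, h2⟩; exact ⟨h1, h2⟩
        · rintro ⟨h1, h2⟩; exact ⟨⟨fun he => ha (he ▸ h2), h1⟩, h2⟩
      obtain ⟨k, hk⟩ : ∃ k, S.card = k + 1 :=
        ⟨S.card - 1, by have := Finset.card_pos.mpr ⟨a, hS⟩; omega⟩
      rw [h1, Finset.card_erase_of_mem hS, hk]
      simp [pow_succ]
    · simp only [if_neg hS]
      have h1 : (insert a S) ∩ T = S ∩ T := by
        ext x
        simp only [Finset.mem_inter, Finset.mem_insert]
        constructor
        · rintro ⟨h1 | h1, h2⟩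
          · exact absurd (h1 ▸ h2) ha
          · exact ⟨h1, h2⟩
        · rintro ⟨h1, h2⟩; exact ⟨Or.inr h1, h2⟩
      rw [h1, Finset.card_insert_of_notMem hS, pow_succ]
      ring
  · intro S _ _
    by_cases hS : a ∈ S
    · simp only [if_pos hS]
      exact fun h => (Finset.erase_eq_self.mp h) hS
    · simp only [if_neg hS]
      exact fun h => hS (h ▸ Finset.mem_insert_self a S)
  · intro S _
    by_cases hS : a ∈ S
    · simp only [if_pos hS, if_neg (Finset.notMem_erase a S)]
      exact Finset.insert_erase hS
    · simp only [if_neg hS, if_pos (Finset.mem_insert_self a S)]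
      exact Finset.erase_insert hS
  · intro S _; exact Finset.mem_univ _

lemma sum_by_card (n : ℕ) (f : ℕ → ℝ) :
    ∑ S : Finset (Fin n), (-1 : ℝ) ^ S.card * f S.card
      = ∑ k ∈ Finset.range (n + 1), (-1 : ℝ) ^ k * (n.choose k) * f k := by
  rw [← Finset.powerset_univ, Finset.sum_powerset, Finset.card_univ, Fintype.card_fin]
  refine Finset.sum_congr rfl fun k hk => ?_
  calc ∑ t ∈ Finset.powersetCard k (Finset.univ : Finset (Fin n)), (-1 : ℝ) ^ t.card * f t.card
      = ∑ t ∈ Finset.powersetCard k (Finset.univ : Finset (Fin n)), (-1 : ℝ) ^ k * f k := by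
        refine Finset.sum_congr rfl fun t ht => ?_
        rw [(Finset.mem_powersetCard.mp ht).2]
    _ = ((n.choose k : ℕ) : ℝ) * ((-1 : ℝ) ^ k * f k) := by
        rw [Finset.sum_const, Finset.card_powersetCard, Finset.card_univ, Fintype.card_fin,
          nsmul_eq_mul]
    _ = (-1 : ℝ) ^ k * (n.choose k) * f k := by ring

lemma pair_sum (n : ℕ) (hn : 1 ≤ n) (g : ℕ → ℝ) :
    ∑ S ∈ Finset.univ.filter (fun S : Finset (Fin n) => S ≠ Finset.univ),
      ∑ T ∈ Finset.univ.filter (fun T : Finset (Fin n) => T ≠ Finset.univ),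
        (-1 : ℝ) ^ S.card * (-1 : ℝ) ^ T.card * g ((S ∩ T).card)
      = ∑ c ∈ Finset.range n, (-1 : ℝ) ^ (n - 1 - c) * (n.choose c) * g c := by
  have hF : Finset.univ.filter (fun S : Finset (Fin n) => S ≠ Finset.univ)
      = (Finset.univ : Finset (Finset (Fin n))).erase Finset.univ := by
    rw [Finset.filter_ne']
  rw [hF]
  have inner : ∀ S : Finset (Fin n), S ≠ Finset.univ →
      ∑ T ∈ (Finset.univ : Finset (Finset (Fin n))).erase Finset.univ,
        (-1 : ℝ) ^ S.card * (-1 : ℝ) ^ T.card * g ((S ∩ T).card)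
      = -((-1 : ℝ) ^ n * ((-1 : ℝ) ^ S.card * g S.card)) := by
    intro S hSu
    have hv : ∑ T : Finset (Fin n), (-1 : ℝ) ^ S.card * (-1 : ℝ) ^ T.card * g ((S ∩ T).card)
        = 0 := by
      have h0 := sum_vanish n S hSu g
      have h1 : ∑ T : Finset (Fin n), (-1 : ℝ) ^ S.card * (-1 : ℝ) ^ T.card * g ((S ∩ T).card)
          = (-1 : ℝ) ^ S.card * ∑ T : Finset (Fin n), (-1 : ℝ) ^ T.card * g ((T ∩ S).card) := by
        rw [Finset.mul_sum]
        exact Finset.sum_congr rfl fun T _ => by rw [Finset.inter_comm]; ring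
      rw [h1, h0, mul_zero]
    have h2 : (∑ T ∈ (Finset.univ : Finset (Finset (Fin n))).erase Finset.univ,
          (-1 : ℝ) ^ S.card * (-1 : ℝ) ^ T.card * g ((S ∩ T).card))
        + (-1 : ℝ) ^ S.card * (-1 : ℝ) ^ (Finset.univ : Finset (Fin n)).card
            * g ((S ∩ (Finset.univ : Finset (Fin n))).card)
        = ∑ T : Finset (Fin n), (-1 : ℝ) ^ S.card * (-1 : ℝ) ^ T.card * g ((S ∩ T).card) :=
      Finset.sum_erase_add _ _ (Finset.mem_univ _)
    rw [hv] at h2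
    have h3 : (-1 : ℝ) ^ S.card * (-1 : ℝ) ^ (Finset.univ : Finset (Fin n)).card
        * g ((S ∩ Finset.univ).card) = (-1 : ℝ) ^ n * ((-1 : ℝ) ^ S.card * g S.card) := by
      rw [Finset.inter_univ, Finset.card_univ, Fintype.card_fin]
      ring
    rw [h3] at h2
    linarith
  rw [Finset.sum_congr rfl fun S hS => inner S (Finset.ne_of_mem_erase hS)]
  have h4 : (∑ S ∈ (Finset.univ : Finset (Finset (Fin n))).erase Finset.univ,
        -((-1 : ℝ) ^ n * ((-1 : ℝ) ^ S.card * g S.card)))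
      + -((-1 : ℝ) ^ n * ((-1 : ℝ) ^ (Finset.univ : Finset (Fin n)).card
          * g (Finset.univ : Finset (Fin n)).card))
      = ∑ S : Finset (Fin n), -((-1 : ℝ) ^ n * ((-1 : ℝ) ^ S.card * g S.card)) :=
    Finset.sum_erase_add _ _ (Finset.mem_univ _)
  have h5 : ∑ S : Finset (Fin n), -((-1 : ℝ) ^ n * ((-1 : ℝ) ^ S.card * g S.card))
      = -((-1 : ℝ) ^ n * ∑ S : Finset (Fin n), (-1 : ℝ) ^ S.card * g S.card) := by
    rw [Finset.mul_sum, ← Finset.sum_neg_distrib]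
  rw [h5, sum_by_card] at h4
  rw [Finset.card_univ, Fintype.card_fin, Finset.sum_range_succ, Nat.choose_self,
    Nat.cast_one] at h4
  have hone : ((-1 : ℝ)) ^ n * ((-1 : ℝ)) ^ n = 1 := by
    rw [← pow_add]; exact Even.neg_one_pow ⟨n, rfl⟩
  have hgn : ∑ S ∈ (Finset.univ : Finset (Finset (Fin n))).erase Finset.univ,
      -((-1 : ℝ) ^ n * ((-1 : ℝ) ^ S.card * g S.card))
      = -((-1 : ℝ) ^ n * ∑ k ∈ Finset.range n, (-1 : ℝ) ^ k * (n.choose k) * g k) := by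
    linear_combination h4
  rw [hgn, Finset.mul_sum, ← Finset.sum_neg_distrib]
  refine Finset.sum_congr rfl fun c hc => ?_
  have hcn : c ≤ n - 1 := by have := Finset.mem_range.mp hc; omega
  have hpow : ((-1 : ℝ)) ^ n = -((-1 : ℝ)) ^ (n - 1) := by
    conv_lhs => rw [show n = (n - 1) + 1 from by omega]
    rw [pow_succ]
    ring
  rw [neg_one_pow_sub hcn, hpow]
  ring


/-- E[D²] = ((n-2)!/(n-1)^{n-2}) · n! ·
∑_{c=0}^{n-1} ((-1)^{n-1-c}/(n-c)) · 1/((n-1)^{n-1-c} c!). -/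
theorem stmt8 (n : ℕ) (hn : 2 ≤ n) :
    (∑ x : Fin n → Fin (n - 1), (Dfun n x) ^ 2) / ((n : ℝ) - 1) ^ n =
      ((Nat.factorial (n - 2) : ℝ) / ((n : ℝ) - 1) ^ (n - 2)) *
        (Nat.factorial n : ℝ) *
        ∑ c ∈ Finset.range n,
          ((-1 : ℝ) ^ (n - 1 - c) / ((n : ℝ) - c)) *
            (1 / (((n : ℝ) - 1) ^ (n - 1 - c) * (Nat.factorial c : ℝ))) := by
  have hx0 : ((n : ℝ) - 1) ≠ 0 := by
    have h2 : (2 : ℝ) ≤ (n : ℝ) := by exact_mod_cast hn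
    linarith
  have e1 : ∀ x : Fin n → Fin (n - 1), (Dfun n x) ^ 2
      = ∑ S ∈ Finset.univ.filter (fun S : Finset (Fin n) => S ≠ Finset.univ),
          ∑ T ∈ Finset.univ.filter (fun T : Finset (Fin n) => T ≠ Finset.univ),
            (cCoef n S * cCoef n T) * (Jind n S x * Jind n T x) := by
    intro x
    rw [sq, Dfun, Finset.sum_mul_sum]
    exact Finset.sum_congr rfl fun S _ => Finset.sum_congr rfl fun T _ => by ring
  have e2 : ∑ x : Fin n → Fin (n - 1), (Dfun n x) ^ 2
      = ∑ S ∈ Finset.univ.filter (fun S : Finset (Fin n) => S ≠ Finset.univ),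
          ∑ T ∈ Finset.univ.filter (fun T : Finset (Fin n) => T ≠ Finset.univ),
            (cCoef n S * cCoef n T) *
              (∑ x : Fin n → Fin (n - 1), Jind n S x * Jind n T x) := by
    rw [Finset.sum_congr rfl fun x _ => e1 x, Finset.sum_comm]
    refine Finset.sum_congr rfl fun S hS => ?_
    rw [Finset.sum_comm]
    refine Finset.sum_congr rfl fun T hT => ?_
    rw [← Finset.mul_sum]
  have e3 : ∀ S ∈ Finset.univ.filter (fun S : Finset (Fin n) => S ≠ Finset.univ),
      ∀ T ∈ Finset.univ.filter (fun T : Finset (Fin n) => T ≠ Finset.univ),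
      (cCoef n S * cCoef n T) * (∑ x : Fin n → Fin (n - 1), Jind n S x * Jind n T x)
      = (-1 : ℝ) ^ S.card * (-1 : ℝ) ^ T.card *
          ((((n - 1).factorial : ℝ) * ((n : ℝ) - 1) ^ n / ((n : ℝ) - 1) ^ (2 * (n - 1))) *
            (((n - 1 - (S ∩ T).card).factorial : ℝ) * ((n : ℝ) - 1) ^ (S ∩ T).card)) := by
    intro S hS T hT
    have hS' : S ≠ Finset.univ := (Finset.mem_filter.mp hS).2
    have hT' : T ≠ Finset.univ := (Finset.mem_filter.mp hT).2
    rw [sum_Jind, count_ST, term_eq n hn S T hS' hT']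
    ring
  rw [e2, Finset.sum_congr rfl fun S hS => Finset.sum_congr rfl fun T hT => e3 S hS T hT]
  rw [pair_sum n (by omega) (fun c =>
    (((n - 1).factorial : ℝ) * ((n : ℝ) - 1) ^ n / ((n : ℝ) - 1) ^ (2 * (n - 1))) *
      (((n - 1 - c).factorial : ℝ) * ((n : ℝ) - 1) ^ c))]
  rw [Finset.sum_div, Finset.mul_sum]
  refine Finset.sum_congr rfl fun c hc => ?_
  have hcn : c < n := Finset.mem_range.mp hc
  have hcast : ((n.choose c : ℕ) : ℝ)
      = (n.factorial : ℝ) / ((c.factorial : ℝ) * ((n - c).factorial : ℝ)) :=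
    Nat.cast_choose ℝ (by omega)
  have hnc : ((n - c).factorial : ℝ) = ((n : ℝ) - c) * ((n - 1 - c).factorial : ℝ) := by
    rw [show n - c = (n - 1 - c) + 1 from by omega, Nat.factorial_succ, Nat.cast_mul]
    congr 1
    rw [show (n - 1 - c) + 1 = n - c from by omega, Nat.cast_sub (by omega : c ≤ n)]
  have hfac : ((n - 1).factorial : ℝ) = ((n : ℝ) - 1) * ((n - 2).factorial : ℝ) := by
    rw [show n - 1 = (n - 2) + 1 from by omega, Nat.factorial_succ, Nat.cast_mul]
    congr 1
    rw [show (n - 2) + 1 = n - 1 from by omega, Nat.cast_sub (by omega : 1 ≤ n), Nat.cast_one]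
  have hp2 : ((n : ℝ) - 1) ^ n = ((n : ℝ) - 1) * ((n : ℝ) - 1) ^ (n - 1) := by
    rw [← pow_succ']
    congr 1
    omega
  have hp4 : ((n : ℝ) - 1) ^ (n - 1 - c) = ((n : ℝ) - 1) ^ (n - 1) / ((n : ℝ) - 1) ^ c :=
    pow_sub_div hx0 (by omega)
  have hp3 : ((n : ℝ) - 1) ^ (n - 1) = ((n : ℝ) - 1) * ((n : ℝ) - 1) ^ (n - 2) := by
    rw [← pow_succ']
    congr 1
    omega
  have hnc0 : ((n : ℝ) - c) ≠ 0 := by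
    have : (c : ℝ) < (n : ℝ) := by exact_mod_cast hcn
    linarith
  have hfc : (c.factorial : ℝ) ≠ 0 := by exact_mod_cast Nat.factorial_ne_zero c
  have hfd : ((n - 1 - c).factorial : ℝ) ≠ 0 := by exact_mod_cast Nat.factorial_ne_zero _
  have hfn2 : ((n - 2).factorial : ℝ) ≠ 0 := by exact_mod_cast Nat.factorial_ne_zero _
  rw [hcast, hnc, hfac, hp2, hp4, two_mul, pow_add, hp3]
  have hxp : ((n : ℝ) - 1) ^ (n - 2) ≠ 0 := pow_ne_zero _ hx0
  have hxc : ((n : ℝ) - 1) ^ c ≠ 0 := pow_ne_zero _ hx0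
  field_simp
end

section
/- For any fixed integer n ≥ 1 and c with 0 ≤ c ≤ n-1, the signed count ∑_{(S,T): S,T ⊊ [n], |S∩T| = c} (-1)^{|S|-|T|} equals (-1)^{n-1-c} · binomial(n, c). -/
/-- ∑_{(S,T): S,T ⊊ [n], |S∩T| = c} (-1)^{|S|-|T|} = (-1)^{n-1-c}·C(n,c).
(Note (-1)^{|S|-|T|} = (-1)^{|S|+|T|}.) -/
theorem stmt10 (n : ℕ) (hn : 1 ≤ n) (c : ℕ) (hc : c ≤ n - 1) :
    ∑ p ∈ (Finset.univ : Finset (Finset (Fin n) × Finset (Fin n))).filter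
        (fun p => p.1 ≠ Finset.univ ∧ p.2 ≠ Finset.univ ∧ (p.1 ∩ p.2).card = c),
      (-1 : ℤ) ^ (p.1.card + p.2.card) =
      (-1 : ℤ) ^ (n - 1 - c) * (n.choose c : ℤ) := by
  classical
  have hcn : c < n := by omega
  set f : Finset (Fin n) × Finset (Fin n) → ℤ :=
    fun p => (-1 : ℤ) ^ (p.1.card + p.2.card) with hf
  set A := (Finset.univ : Finset (Finset (Fin n) × Finset (Fin n))).filter
      (fun p => p.1 ≠ Finset.univ ∧ (p.1 ∩ p.2).card = c) with hA
  -- the sum over A vanishes by an involution toggling an element outside p.1 in p.2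
  have hne : ∀ p : Finset (Fin n) × Finset (Fin n), p ∈ A → (p.1ᶜ).Nonempty := by
    intro p hp
    rw [hA, Finset.mem_filter] at hp
    rw [Finset.nonempty_iff_ne_empty]
    intro h
    exact hp.2.1 (by simpa using congrArg compl h)
  have hAzero : ∑ p ∈ A, f p = 0 := by
    refine Finset.sum_involution
      (fun p hp => (p.1, if (p.1ᶜ).min' (hne p hp) ∈ p.2
        then p.2.erase ((p.1ᶜ).min' (hne p hp))
        else insert ((p.1ᶜ).min' (hne p hp)) p.2)) ?_ ?_ ?_ ?_
    · intro p hp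
      set a := (p.1ᶜ).min' (hne p hp) with ha
      have hanot : a ∉ p.1 := by
        have := Finset.min'_mem (p.1ᶜ) (hne p hp)
        simpa using this
      by_cases h : a ∈ p.2
      · simp only [h, if_pos]
        have hcard : (p.2.erase a).card = p.2.card - 1 := Finset.card_erase_of_mem h
        have hpos : 1 ≤ p.2.card := Finset.card_pos.mpr ⟨a, h⟩
        have : p.1.card + p.2.card = (p.1.card + (p.2.card - 1)) + 1 := by omega
        simp only [hf, hcard, this, pow_succ]
        ring
      · simp only [h, if_neg, not_false_iff]
        have hcard : (insert a p.2).card = p.2.card + 1 := Finset.card_insert_of_notMem h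
        have : p.1.card + (p.2.card + 1) = (p.1.card + p.2.card) + 1 := by omega
        simp only [hf, hcard, this, pow_succ]
        ring
    · intro p hp _
      set a := (p.1ᶜ).min' (hne p hp) with ha
      by_cases h : a ∈ p.2
      · simp only [h, if_pos]
        intro hcontra
        have : p.2.erase a = p.2 := congrArg Prod.snd hcontra
        rw [← this] at h
        exact (Finset.notMem_erase a p.2) h
      · simp only [h, if_neg, not_false_iff]
        intro hcontra
        have : insert a p.2 = p.2 := congrArg Prod.snd hcontra
        exact h (this ▸ Finset.mem_insert_self a p.2)
    · intro p hp
      set a := (p.1ᶜ).min' (hne p hp) with ha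
      have hanot : a ∉ p.1 := by
        have := Finset.min'_mem (p.1ᶜ) (hne p hp)
        simpa using this
      have hp2 := (Finset.mem_filter.mp hp).2
      try dsimp only
      refine Finset.mem_filter.mpr ⟨Finset.mem_univ _, ?_⟩
      by_cases h : a ∈ p.2 <;> simp only [h, if_pos, if_neg, not_false_iff]
      · refine ⟨hp2.1, ?_⟩
        have : p.1 ∩ p.2.erase a = p.1 ∩ p.2 := by
          ext x
          simp only [Finset.mem_inter, Finset.mem_erase]
          constructor
          · rintro ⟨hx1, _, hx2⟩; exact ⟨hx1, hx2⟩
          · rintro ⟨hx1, hx2⟩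
            exact ⟨hx1, fun hxa => hanot (hxa ▸ hx1), hx2⟩
        rw [this]; exact hp2.2
      · refine ⟨hp2.1, ?_⟩
        have : p.1 ∩ insert a p.2 = p.1 ∩ p.2 := by
          ext x
          simp only [Finset.mem_inter, Finset.mem_insert]
          constructor
          · rintro ⟨hx1, hxa | hx2⟩
            · exact absurd (hxa ▸ hx1) hanot
            · exact ⟨hx1, hx2⟩
          · rintro ⟨hx1, hx2⟩; exact ⟨hx1, Or.inr hx2⟩
        rw [this]; exact hp2.2
    · intro p hp
      set a := (p.1ᶜ).min' (hne p hp) with ha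
      by_cases h : a ∈ p.2
      · simp only [h, if_pos]
        have h2 : a ∉ p.2.erase a := Finset.notMem_erase a p.2
        simp only [h2, if_neg, not_false_iff]
        exact Prod.ext rfl (Finset.insert_erase h)
      · simp only [h, if_neg, not_false_iff]
        have h2 : a ∈ insert a p.2 := Finset.mem_insert_self a p.2
        simp only [h2, if_pos]
        exact Prod.ext rfl (Finset.erase_insert h)
  -- split A into the target set B and the part C where p.2 = univ
  have hsplit : ∑ p ∈ A.filter (fun p => p.2 ≠ Finset.univ), f p
      + ∑ p ∈ A.filter (fun p => ¬ p.2 ≠ Finset.univ), f p = ∑ p ∈ A, f p :=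
    Finset.sum_filter_add_sum_filter_not A _ f
  have hB : A.filter (fun p => p.2 ≠ Finset.univ)
      = (Finset.univ : Finset (Finset (Fin n) × Finset (Fin n))).filter
        (fun p => p.1 ≠ Finset.univ ∧ p.2 ≠ Finset.univ ∧ (p.1 ∩ p.2).card = c) := by
    rw [hA, Finset.filter_filter]
    apply Finset.filter_congr
    intro p _
    tauto
  -- compute the sum over C
  have hCset : A.filter (fun p => ¬ p.2 ≠ Finset.univ)
      = (Finset.powersetCard c (Finset.univ : Finset (Fin n))).image
        (fun S => (S, (Finset.univ : Finset (Fin n)))) := by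
    ext p
    simp only [hA, Finset.filter_filter, Finset.mem_filter, Finset.mem_univ, true_and,
      Finset.mem_image, Finset.mem_powersetCard, not_not]
    constructor
    · rintro ⟨⟨h1, h2⟩, h3⟩
      refine ⟨p.1, ⟨Finset.subset_univ _, ?_⟩, ?_⟩
      · rw [← h2, h3, Finset.inter_univ]
      · exact Prod.ext rfl h3.symm
    · rintro ⟨S, ⟨_, hS⟩, rfl⟩
      refine ⟨⟨?_, by simpa using hS⟩, rfl⟩
      intro hcontra
      have hSu : S = Finset.univ := hcontra
      rw [hSu] at hS
      simp only [Finset.card_univ, Fintype.card_fin] at hS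
      omega
  have hCsum : ∑ p ∈ A.filter (fun p => ¬ p.2 ≠ Finset.univ), f p
      = (-1 : ℤ) ^ (c + n) * (n.choose c : ℤ) := by
    rw [hCset, Finset.sum_image (by intro x _ y _ h; exact (Prod.ext_iff.mp h).1)]
    have : ∀ S ∈ Finset.powersetCard c (Finset.univ : Finset (Fin n)),
        f (S, (Finset.univ : Finset (Fin n))) = (-1 : ℤ) ^ (c + n) := by
      intro S hS
      rw [Finset.mem_powersetCard] at hS
      simp [hf, hS.2, Finset.card_univ]
    rw [Finset.sum_congr rfl this, Finset.sum_const, Finset.card_powersetCard,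
      Finset.card_univ, Fintype.card_fin, nsmul_eq_mul, mul_comm]
  have hBsum : ∑ p ∈ A.filter (fun p => p.2 ≠ Finset.univ), f p
      = - ((-1 : ℤ) ^ (c + n) * (n.choose c : ℤ)) := by
    rw [hAzero, hCsum] at hsplit
    linarith
  rw [← hB]
  rw [hBsum]
  have hexp : c + n = (n - 1 - c) + (2 * c + 1) := by omega
  have h1 : (-1 : ℤ) ^ (2 * c + 1) = -1 := by
    rw [pow_succ, pow_mul]; simp
  rw [hexp, pow_add, h1]
  ring
end

section
/- For n ≥ 2, the alternating sum ∑_{c=0}^{n-1} ((-1)^{n-1-c}/(n-c)) · 1/((n-1)^{n-1-c} · c!) is at most 1/(n-1)!. -/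
open Finset

/-- Alternating partial sums of an antitone nonnegative sequence lie in `[0, f 0]`. -/
lemma alt_bound (m : ℕ) : ∀ (f : ℕ → ℝ), (∀ k, f (k + 1) ≤ f k) → (∀ k, 0 ≤ f k) →
    0 ≤ ∑ k ∈ range m, (-1 : ℝ) ^ k * f k ∧ ∑ k ∈ range m, (-1 : ℝ) ^ k * f k ≤ f 0 := by
  induction m with
  | zero => intro f _ hpos; simp [hpos 0]
  | succ m ih =>
    intro f hmono hpos
    obtain ⟨h1, h2⟩ := ih (fun k => f (k + 1)) (fun k => hmono (k + 1)) (fun k => hpos (k + 1))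
    have hs : ∑ k ∈ range (m + 1), (-1 : ℝ) ^ k * f k
        = f 0 - ∑ k ∈ range m, (-1 : ℝ) ^ k * f (k + 1) := by
      rw [Finset.sum_range_succ', pow_zero, one_mul]
      have : (∑ i ∈ range m, (-1 : ℝ) ^ (i + 1) * f (i + 1))
          = -∑ i ∈ range m, (-1 : ℝ) ^ i * f (i + 1) := by
        rw [← Finset.sum_neg_distrib]
        apply Finset.sum_congr rfl
        intros; ring
      rw [this]; ring
    rw [hs]
    constructor
    · have := hmono 0
      linarith
    · linarith

/-- For n ≥ 2, ∑_{c=0}^{n-1} ((-1)^{n-1-c}/(n-c)) · 1/((n-1)^{n-1-c} c!)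
is at most 1/(n-1)!. -/
theorem stmt11 (n : ℕ) (hn : 2 ≤ n) :
    ∑ c ∈ Finset.range n,
        ((-1 : ℝ) ^ (n - 1 - c) / ((n : ℝ) - c)) *
          (1 / (((n : ℝ) - 1) ^ (n - 1 - c) * (Nat.factorial c : ℝ))) ≤
      1 / (Nat.factorial (n - 1) : ℝ) := by
  have hn1 : (1 : ℝ) ≤ (n : ℝ) - 1 := by
    have : (2 : ℝ) ≤ (n : ℝ) := by exact_mod_cast hn
    linarith
  set f : ℕ → ℝ :=
    fun k => 1 / (((k : ℝ) + 1) * (((n : ℝ) - 1) ^ k * (Nat.factorial (n - 1 - k) : ℝ)))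
    with hf
  have hDpos : ∀ k : ℕ, 0 < ((k : ℝ) + 1) * (((n : ℝ) - 1) ^ k * (Nat.factorial (n - 1 - k) : ℝ)) := by
    intro k
    have h1 : (0 : ℝ) < (k : ℝ) + 1 := by positivity
    have h2 : (0 : ℝ) < ((n : ℝ) - 1) ^ k := pow_pos (by linarith) k
    have h3 : (0 : ℝ) < (Nat.factorial (n - 1 - k) : ℝ) := by
      exact_mod_cast Nat.factorial_pos _
    exact mul_pos h1 (mul_pos h2 h3)
  have hfpos : ∀ k, 0 ≤ f k := fun k => le_of_lt (by simpa [hf] using one_div_pos.mpr (hDpos k))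
  have hmono : ∀ k, f (k + 1) ≤ f k := by
    intro k
    simp only [hf]
    apply one_div_le_one_div_of_le (hDpos k)
    have hfac : (Nat.factorial (n - 1 - k) : ℝ)
        ≤ ((n : ℝ) - 1) * (Nat.factorial (n - 1 - (k + 1)) : ℝ) := by
      have hnn : n - 1 - (k + 1) = (n - 1 - k) - 1 := by omega
      rw [hnn]
      rcases Nat.eq_zero_or_pos (n - 1 - k) with h | h
      · simp [h]; linarith
      · have : Nat.factorial (n - 1 - k)
            = (n - 1 - k) * Nat.factorial ((n - 1 - k) - 1) := by
          obtain ⟨m, hm⟩ := Nat.exists_eq_succ_of_ne_zero (Nat.pos_iff_ne_zero.mp h)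
          rw [hm]; simp [Nat.factorial_succ]
        rw [this]
        push_cast
        have hle : ((n - 1 - k : ℕ) : ℝ) ≤ (n : ℝ) - 1 := by
          have : ((n - 1 - k : ℕ) : ℝ) ≤ ((n - 1 : ℕ) : ℝ) := by
            exact_mod_cast Nat.sub_le _ _
          have h2 : ((n - 1 : ℕ) : ℝ) = (n : ℝ) - 1 := by
            rw [Nat.cast_sub (by omega)]; simp
          linarith [this, h2.le]
        have hfp : (0 : ℝ) < (Nat.factorial ((n - 1 - k) - 1) : ℝ) := by
          exact_mod_cast Nat.factorial_pos _
        nlinarith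
    calc ((k : ℝ) + 1) * (((n : ℝ) - 1) ^ k * (Nat.factorial (n - 1 - k) : ℝ))
        ≤ ((k : ℝ) + 1) * (((n : ℝ) - 1) ^ k *
            (((n : ℝ) - 1) * (Nat.factorial (n - 1 - (k + 1)) : ℝ))) := by
          apply mul_le_mul_of_nonneg_left _ (by positivity)
          apply mul_le_mul_of_nonneg_left hfac
          positivity
      _ ≤ (((k : ℝ) + 1) + 1) * (((n : ℝ) - 1) ^ (k + 1) *
            (Nat.factorial (n - 1 - (k + 1)) : ℝ)) := by
          have hfp : (0 : ℝ) < (Nat.factorial (n - 1 - (k + 1)) : ℝ) := by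
            exact_mod_cast Nat.factorial_pos _
          have hp : (0 : ℝ) ≤ ((n : ℝ) - 1) ^ k := by positivity
          rw [pow_succ]
          nlinarith [pow_pos (show (0:ℝ) < (n:ℝ) - 1 by linarith) k]
      _ = (((k + 1 : ℕ) : ℝ) + 1) * (((n : ℝ) - 1) ^ (k + 1) *
            (Nat.factorial (n - 1 - (k + 1)) : ℝ)) := by push_cast; ring
  have key : ∑ c ∈ Finset.range n,
        ((-1 : ℝ) ^ (n - 1 - c) / ((n : ℝ) - c)) *
          (1 / (((n : ℝ) - 1) ^ (n - 1 - c) * (Nat.factorial c : ℝ)))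
      = ∑ k ∈ range n, (-1 : ℝ) ^ k * f k := by
    rw [← Finset.sum_range_reflect (fun k => (-1 : ℝ) ^ k * f k) n]
    apply Finset.sum_congr rfl
    intro c hc
    simp only [Finset.mem_range] at hc
    have h2 : n - 1 - (n - 1 - c) = c := by omega
    have h3 : ((n - 1 - c : ℕ) : ℝ) = (n : ℝ) - 1 - (c : ℝ) := by
      rw [show n - 1 - c = n - (1 + c) from by omega, Nat.cast_sub (by omega)]
      push_cast; ring
    simp only [hf, h2, h3]
    have hnc : (n : ℝ) - (c : ℝ) ≠ 0 := by
      have : (c : ℝ) < (n : ℝ) := by exact_mod_cast hc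
      linarith
    have hd : (0 : ℝ) < ((n : ℝ) - 1) ^ (n - 1 - c) * (Nat.factorial c : ℝ) := by
      have : (0 : ℝ) < (Nat.factorial c : ℝ) := by exact_mod_cast Nat.factorial_pos c
      have : (0 : ℝ) < ((n : ℝ) - 1) ^ (n - 1 - c) := pow_pos (by linarith) _
      positivity
    have hA : (n : ℝ) - 1 - (c : ℝ) + 1 = (n : ℝ) - (c : ℝ) := by ring
    rw [hA, div_mul_div_comm, mul_one, mul_one_div]
  rw [key]
  have := (alt_bound n f hmono hfpos).2
  have hf0 : f 0 = 1 / (Nat.factorial (n - 1) : ℝ) := by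
    simp [hf]
  rw [hf0] at this
  exact this
end

section
/- For n ≥ 3, there exists a family of weakenings (each a monomial multiple of a non-minimality axiom or transitivity axiom of the ordering principle on n elements) with 0/1 coefficients such that the sum of the chosen weakenings equals the constant function 1 on all assignments x ∈ {0,1}^{binom(n,2)}, and the number of chosen weakenings is exactly 2^n − n. -/
/-- Value of a weakening, encoded as the set E of literals x_{i,j} (ordered pairs)
appearing in it, on an assignment x (with x j i = !x i j for i ≠ j):
W(x) = ∏_{(i,j)∈E} x_{i,j}. -/
noncomputable def wVal (n : ℕ) (E : Finset (Fin n × Fin n))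
    (x : Fin n → Fin n → Bool) : ℝ :=
  ∏ p ∈ E, if x p.1 p.2 then 1 else 0

/-- The non-minimality axiom for element i: the monomial ∏_{j≠i} x_{i,j}. -/
def nonMinAxiom (n : ℕ) (i : Fin n) : Finset (Fin n × Fin n) :=
  (Finset.univ.filter (fun j => j ≠ i)).image (fun j => (i, j))

/-- E is a weakening of an axiom of the ordering principle: a monomial
(set of literals x_{i,j}, i ≠ j) containing a non-minimality axiom or a
transitivity axiom x_{i,j}x_{j,k}x_{k,i}. -/
def IsWeakening (n : ℕ) (E : Finset (Fin n × Fin n)) : Prop :=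
  (∀ p ∈ E, p.1 ≠ p.2) ∧
    ((∃ i : Fin n, nonMinAxiom n i ⊆ E) ∨
      (∃ i j k : Fin n, i ≠ j ∧ j ≠ k ∧ i ≠ k ∧
        ({(i, j), (j, k), (k, i)} : Finset (Fin n × Fin n)) ⊆ E))

namespace Stmt16

variable {n : ℕ}

/-- Relative non-minimality monomial: i beats everything in V. -/
def Ax (V : Finset (Fin n)) (i : Fin n) : Finset (Fin n × Fin n) :=
  (V.erase i).image fun j => (i, j)

lemma mem_Ax {V : Finset (Fin n)} {i : Fin n} {q : Fin n × Fin n} :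
    q ∈ Ax V i ↔ q.1 = i ∧ q.2 ∈ V ∧ q.2 ≠ i := by
  constructor
  · intro h
    obtain ⟨j, hj, rfl⟩ := Finset.mem_image.mp h
    rw [Finset.mem_erase] at hj
    exact ⟨rfl, hj.2, hj.1⟩
  · rintro ⟨h1, h2, h3⟩
    refine Finset.mem_image.mpr ⟨q.2, Finset.mem_erase.mpr ⟨h3, h2⟩, ?_⟩
    rw [← h1]

lemma Ax_insert {V : Finset (Fin n)} {i v : Fin n} (hv : v ∈ V) (hiv : i ≠ v) :
    Ax V i = insert (i, v) (Ax (V.erase v) i) := by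
  ext q
  rw [Finset.mem_insert, mem_Ax, mem_Ax, Finset.mem_erase]
  constructor
  · rintro ⟨h1, h2, h3⟩
    by_cases hq : q.2 = v
    · left; rw [Prod.ext_iff]; exact ⟨h1, hq⟩
    · right; exact ⟨h1, ⟨hq, h2⟩, h3⟩
  · rintro (rfl | ⟨h1, ⟨h2a, h2b⟩, h3⟩)
    · exact ⟨rfl, hv, Ne.symm hiv⟩
    · exact ⟨h1, h2b, h3⟩

lemma not_mem_Ax_erase {V : Finset (Fin n)} {i v : Fin n} :
    (i, v) ∉ Ax (V.erase v) i := by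
  rw [mem_Ax]
  rintro ⟨-, h2, -⟩
  exact (Finset.mem_erase.mp h2).1 rfl

private lemma nonemptyOf {V : Finset (Fin n)} (h : 3 ≤ V.card) : V.Nonempty :=
  Finset.card_pos.mp (by omega)

/-- The cycle-type blocks of the partition. -/
def CY (V : Finset (Fin n)) : Finset (Finset (Fin n × Fin n)) :=
  if h : 3 ≤ V.card then
    let p := V.min' (nonemptyOf h)
    let v := V.max' (nonemptyOf h)
    let M := (V.erase p).erase v
    ((CY (V.erase v)).image (insert (p, v))) ∪
      (M.image fun i => insert (p, v) (insert (v, i) (Ax (V.erase v) i))) ∪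
      ((CY (V.erase p)).image (insert (v, p))) ∪
      (M.image fun i => insert (v, p) (insert (p, i) (Ax (V.erase p) i)))
  else ∅
termination_by V.card
decreasing_by
  · exact Finset.card_erase_lt_of_mem (V.max'_mem (nonemptyOf h))
  · exact Finset.card_erase_lt_of_mem (V.min'_mem (nonemptyOf h))

lemma CY_of_card {V : Finset (Fin n)} (h : 3 ≤ V.card) (hne : V.Nonempty) :
    CY V = ((CY (V.erase (V.max' hne))).image (insert (V.min' hne, V.max' hne))) ∪
      (((V.erase (V.min' hne)).erase (V.max' hne)).image fun i =>
        insert (V.min' hne, V.max' hne) (insert (V.max' hne, i) (Ax (V.erase (V.max' hne)) i))) ∪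
      ((CY (V.erase (V.min' hne))).image (insert (V.max' hne, V.min' hne))) ∪
      (((V.erase (V.min' hne)).erase (V.max' hne)).image fun i =>
        insert (V.max' hne, V.min' hne) (insert (V.min' hne, i) (Ax (V.erase (V.min' hne)) i))) := by
  rw [CY, dif_pos h]

lemma CY_of_small {V : Finset (Fin n)} (h : ¬ 3 ≤ V.card) : CY V = ∅ := by
  rw [CY, dif_neg h]

/-- Invariant of cycle blocks. -/
def Good (V : Finset (Fin n)) (C : Finset (Fin n × Fin n)) : Prop :=
  (∀ q ∈ C, q.1 ∈ V ∧ q.2 ∈ V ∧ q.1 ≠ q.2) ∧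
    ∃ a b c : Fin n, a ≠ b ∧ b ≠ c ∧ a ≠ c ∧
      (a, b) ∈ C ∧ (b, c) ∈ C ∧ (c, a) ∈ C

lemma wVal_insert {E : Finset (Fin n × Fin n)} {q : Fin n × Fin n}
    {x : Fin n → Fin n → Bool} (h : q ∉ E) :
    wVal n (insert q E) x = (if x q.1 q.2 then (1:ℝ) else 0) * wVal n E x :=
  Finset.prod_insert h

theorem master (V : Finset (Fin n)) (h2 : 2 ≤ V.card) :
    (∀ C ∈ CY V, Good V C) ∧
    ((CY V).card + 2 * V.card = 2 ^ V.card) ∧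
    (∀ x : Fin n → Fin n → Bool, (∀ i j : Fin n, i ≠ j → x j i = !x i j) →
      (∑ i ∈ V, wVal n (Ax V i) x) + (∑ C ∈ CY V, wVal n C x) = 1) := by
  by_cases h3 : 3 ≤ V.card
  case neg =>
    have hc : V.card = 2 := by omega
    refine ⟨by simp [CY_of_small h3], by simp [CY_of_small h3, hc], ?_⟩
    intro x hx
    rw [CY_of_small h3, Finset.sum_empty]
    obtain ⟨a, b, hab, rfl⟩ := Finset.card_eq_two.mp hc
    have e1 : ({a, b} : Finset (Fin n)).erase a = {b} := by
      rw [show ({a, b} : Finset (Fin n)) = insert a {b} from rfl,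
        Finset.erase_insert (by simp [hab])]
    have e2 : ({a, b} : Finset (Fin n)).erase b = {a} := by
      rw [show ({a, b} : Finset (Fin n)) = insert a {b} from rfl]
      ext u
      simp only [Finset.mem_erase, Finset.mem_insert, Finset.mem_singleton]
      constructor
      · rintro ⟨h1, (rfl | rfl)⟩
        · rfl
        · exact absurd rfl h1
      · rintro rfl; exact ⟨hab, Or.inl rfl⟩
    rw [Finset.sum_pair hab, add_zero]
    have hA1 : Ax ({a, b} : Finset (Fin n)) a = {(a, b)} := by
      rw [Ax, e1, Finset.image_singleton]
    have hA2 : Ax ({a, b} : Finset (Fin n)) b = {(b, a)} := by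
      rw [Ax, e2, Finset.image_singleton]
    rw [hA1, hA2, wVal, wVal, Finset.prod_singleton, Finset.prod_singleton]
    have := hx a b hab
    rw [this]
    cases x a b <;> norm_num
  case pos =>
  have hne : V.Nonempty := Finset.card_pos.mp (by omega)
  have hcV1 : 1 < V.card := by omega
  set p := V.min' hne with hp_def
  set v := V.max' hne with hv_def
  have hpV : p ∈ V := V.min'_mem hne
  have hvV : v ∈ V := V.max'_mem hne
  have hpv : p ≠ v := ne_of_lt (V.min'_lt_max'_of_card hcV1)
  set M := (V.erase p).erase v with hM_def
  have hmemM : ∀ i ∈ M, i ∈ V ∧ i ≠ p ∧ i ≠ v := by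
    intro i hi
    rw [hM_def, Finset.mem_erase, Finset.mem_erase] at hi
    exact ⟨hi.2.2, hi.2.1, hi.1⟩
  have hpM : p ∉ M := by simp [hM_def, Finset.mem_erase]
  have hvM : v ∉ M := by simp [hM_def, Finset.mem_erase]
  have hW1 : V.erase v = insert p M := by
    ext u
    simp only [hM_def, Finset.mem_erase, Finset.mem_insert]
    constructor
    · rintro ⟨huv, huV⟩
      by_cases hup : u = p
      · exact Or.inl hup
      · exact Or.inr ⟨huv, hup, huV⟩
    · rintro (rfl | ⟨huv, -, huV⟩)
      · exact ⟨hpv, hpV⟩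
      · exact ⟨huv, huV⟩
  have hW2 : V.erase p = insert v M := by
    ext u
    simp only [hM_def, Finset.mem_erase, Finset.mem_insert]
    constructor
    · rintro ⟨hup, huV⟩
      by_cases huv : u = v
      · exact Or.inl huv
      · exact Or.inr ⟨huv, hup, huV⟩
    · rintro (rfl | ⟨huv, hup, huV⟩)
      · exact ⟨Ne.symm hpv, hvV⟩
      · exact ⟨hup, huV⟩
  have hVins : V = insert p (insert v M) := by
    rw [← hW2]
    exact (Finset.insert_erase hpV).symm
  have hcard1 : (V.erase v).card = V.card - 1 := Finset.card_erase_of_mem hvV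
  have hcard2 : (V.erase p).card = V.card - 1 := Finset.card_erase_of_mem hpV
  have hcardM : M.card = V.card - 2 := by
    rw [hM_def, Finset.card_erase_of_mem (by rw [Finset.mem_erase]; exact ⟨Ne.symm hpv, hvV⟩), hcard2]
    omega
  obtain ⟨good1, card1, sum1⟩ := master (V.erase v) (by omega)
  obtain ⟨good2, card2, sum2⟩ := master (V.erase p) (by omega)
  have hCY := CY_of_card h3 hne
  rw [← hp_def, ← hv_def, ← hM_def] at hCY
  set P1 := (CY (V.erase v)).image (insert ((p : Fin n), v)) with hP1
  set P2 := M.image fun i => insert ((p : Fin n), v) (insert (v, i) (Ax (V.erase v) i)) with hP2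
  set P3 := (CY (V.erase p)).image (insert ((v : Fin n), p)) with hP3
  set P4 := M.image fun i => insert ((v : Fin n), p) (insert (p, i) (Ax (V.erase p) i)) with hP4
  -- fresh facts
  have fresh1 : ∀ C ∈ CY (V.erase v), (p, v) ∉ C := by
    intro C hC hmem
    exact (Finset.mem_erase.mp ((good1 C hC).1 _ hmem).2.1).1 rfl
  have fresh3 : ∀ C ∈ CY (V.erase p), (v, p) ∉ C := by
    intro C hC hmem
    exact (Finset.mem_erase.mp ((good2 C hC).1 _ hmem).2.1).1 rfl
  have fresh2a : ∀ i ∈ M, ((p : Fin n), v) ∉ insert (v, i) (Ax (V.erase v) i) := by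
    intro i hi h
    rcases Finset.mem_insert.mp h with h | h
    · exact hpv (congrArg Prod.fst h)
    · exact (hmemM i hi).2.1 ((mem_Ax.mp h).1.symm)
  have fresh2b : ∀ i : Fin n, ((v : Fin n), i) ∉ Ax (V.erase v) i → True := fun _ _ => trivial
  have fresh2c : ∀ i ∈ M, ((v : Fin n), i) ∉ Ax (V.erase v) i := by
    intro i hi h
    exact (hmemM i hi).2.2 ((mem_Ax.mp h).1.symm)
  have fresh4a : ∀ i ∈ M, ((v : Fin n), p) ∉ insert (p, i) (Ax (V.erase p) i) := by
    intro i hi h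
    rcases Finset.mem_insert.mp h with h | h
    · exact hpv (congrArg Prod.fst h).symm
    · exact (hmemM i hi).2.2 ((mem_Ax.mp h).1.symm)
  have fresh4c : ∀ i ∈ M, ((p : Fin n), i) ∉ Ax (V.erase p) i := by
    intro i hi h
    exact (hmemM i hi).2.1 ((mem_Ax.mp h).1.symm)
  -- distinguishing predicates
  have pv_mem_P12 : ∀ B ∈ P1 ∪ P2, ((p : Fin n), v) ∈ B := by
    intro B hB
    rcases Finset.mem_union.mp hB with h | h
    · obtain ⟨C, _, rfl⟩ := Finset.mem_image.mp h
      exact Finset.mem_insert_self _ _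
    · obtain ⟨i, _, rfl⟩ := Finset.mem_image.mp h
      exact Finset.mem_insert_self _ _
  have pv_notmem_P3 : ∀ B ∈ P3, ((p : Fin n), v) ∉ B := by
    intro B hB h
    obtain ⟨C, hC, rfl⟩ := Finset.mem_image.mp hB
    rcases Finset.mem_insert.mp h with h | h
    · exact hpv (congrArg Prod.fst h)
    · exact (Finset.mem_erase.mp ((good2 C hC).1 _ h).1).1 rfl
  have pv_notmem_P4 : ∀ B ∈ P4, ((p : Fin n), v) ∉ B := by
    intro B hB h
    obtain ⟨i, hi, rfl⟩ := Finset.mem_image.mp hB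
    rcases Finset.mem_insert.mp h with h | h
    · exact hpv (congrArg Prod.fst h)
    · rcases Finset.mem_insert.mp h with h | h
      · exact (hmemM i hi).2.2 (congrArg Prod.snd h).symm
      · exact (hmemM i hi).2.1 ((mem_Ax.mp h).1.symm)
  have d12 : Disjoint P1 P2 := by
    rw [Finset.disjoint_left]
    intro B hB1 hB2
    obtain ⟨C, hC, rfl⟩ := Finset.mem_image.mp hB1
    obtain ⟨i, hi, heq⟩ := Finset.mem_image.mp hB2
    have hvi : ((v : Fin n), i) ∈ insert ((p : Fin n), v) C := by
      rw [← heq]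
      exact Finset.mem_insert_of_mem (Finset.mem_insert_self _ _)
    rcases Finset.mem_insert.mp hvi with h | h
    · exact (Ne.symm hpv) (congrArg Prod.fst h)
    · exact (Finset.mem_erase.mp ((good1 C hC).1 _ h).1).1 rfl
  have d34 : Disjoint P3 P4 := by
    rw [Finset.disjoint_left]
    intro B hB1 hB2
    obtain ⟨C, hC, rfl⟩ := Finset.mem_image.mp hB1
    obtain ⟨i, hi, heq⟩ := Finset.mem_image.mp hB2
    have hvi : ((p : Fin n), i) ∈ insert ((v : Fin n), p) C := by
      rw [← heq]
      exact Finset.mem_insert_of_mem (Finset.mem_insert_self _ _)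
    rcases Finset.mem_insert.mp hvi with h | h
    · exact hpv (congrArg Prod.fst h)
    · exact (Finset.mem_erase.mp ((good2 C hC).1 _ h).1).1 rfl
  have d12_3 : Disjoint (P1 ∪ P2) P3 := by
    rw [Finset.disjoint_left]
    intro B hB1 hB2
    exact pv_notmem_P3 B hB2 (pv_mem_P12 B hB1)
  have d12_4 : Disjoint (P1 ∪ P2) P4 := by
    rw [Finset.disjoint_left]
    intro B hB1 hB2
    exact pv_notmem_P4 B hB2 (pv_mem_P12 B hB1)
  have d123_4 : Disjoint (P1 ∪ P2 ∪ P3) P4 := by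
    rw [Finset.disjoint_union_left]
    exact ⟨d12_4, d34⟩
  -- injectivity
  have inj1 : ∀ C ∈ CY (V.erase v), ∀ C' ∈ CY (V.erase v),
      insert ((p : Fin n), v) C = insert ((p : Fin n), v) C' → C = C' := by
    intro C hC C' hC' h
    rw [← Finset.erase_insert (fresh1 C hC), ← Finset.erase_insert (fresh1 C' hC'), h]
  have inj3 : ∀ C ∈ CY (V.erase p), ∀ C' ∈ CY (V.erase p),
      insert ((v : Fin n), p) C = insert ((v : Fin n), p) C' → C = C' := by
    intro C hC C' hC' h
    rw [← Finset.erase_insert (fresh3 C hC), ← Finset.erase_insert (fresh3 C' hC'), h]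
  have inj2 : ∀ i ∈ M, ∀ i' ∈ M,
      insert ((p : Fin n), v) (insert (v, i) (Ax (V.erase v) i)) =
      insert ((p : Fin n), v) (insert (v, i') (Ax (V.erase v) i')) → i = i' := by
    intro i hi i' hi' h
    have : ((v : Fin n), i) ∈ insert ((p : Fin n), v) (insert (v, i') (Ax (V.erase v) i')) := by
      rw [← h]
      exact Finset.mem_insert_of_mem (Finset.mem_insert_self _ _)
    rcases Finset.mem_insert.mp this with h' | h'
    · exact absurd (congrArg Prod.fst h') (Ne.symm hpv)
    · rcases Finset.mem_insert.mp h' with h' | h'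
      · exact congrArg Prod.snd h'
      · exact absurd ((mem_Ax.mp h').1.symm) (hmemM i' hi').2.2
  have inj4 : ∀ i ∈ M, ∀ i' ∈ M,
      insert ((v : Fin n), p) (insert (p, i) (Ax (V.erase p) i)) =
      insert ((v : Fin n), p) (insert (p, i') (Ax (V.erase p) i')) → i = i' := by
    intro i hi i' hi' h
    have : ((p : Fin n), i) ∈ insert ((v : Fin n), p) (insert (p, i') (Ax (V.erase p) i')) := by
      rw [← h]
      exact Finset.mem_insert_of_mem (Finset.mem_insert_self _ _)
    rcases Finset.mem_insert.mp this with h' | h'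
    · exact absurd (congrArg Prod.fst h') hpv
    · rcases Finset.mem_insert.mp h' with h' | h'
      · exact congrArg Prod.snd h'
      · exact absurd ((mem_Ax.mp h').1.symm) (hmemM i' hi').2.1
  refine ⟨?_, ?_, ?_⟩
  -- GOOD
  · intro C hC
    rw [hCY] at hC
    have herase1 : V.erase v ⊆ V := Finset.erase_subset _ _
    have herase2 : V.erase p ⊆ V := Finset.erase_subset _ _
    rcases Finset.mem_union.mp hC with hC | hC4
    rcases Finset.mem_union.mp hC with hC | hC3
    rcases Finset.mem_union.mp hC with hC1 | hC2
    · obtain ⟨C0, hC0, rfl⟩ := Finset.mem_image.mp hC1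
      obtain ⟨hcomp, a0, b0, c0, h1, h2, h3, m1, m2, m3⟩ := good1 C0 hC0
      refine ⟨?_, a0, b0, c0, h1, h2, h3,
        Finset.mem_insert_of_mem m1, Finset.mem_insert_of_mem m2, Finset.mem_insert_of_mem m3⟩
      intro q hq
      rcases Finset.mem_insert.mp hq with rfl | hq
      · exact ⟨hpV, hvV, hpv⟩
      · obtain ⟨ha, hb, hc⟩ := hcomp q hq
        exact ⟨herase1 ha, herase1 hb, hc⟩
    · obtain ⟨i, hi, rfl⟩ := Finset.mem_image.mp hC2
      obtain ⟨hiV, hip, hiv⟩ := hmemM i hi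
      refine ⟨?_, p, v, i, hpv, Ne.symm hiv, Ne.symm hip,
        Finset.mem_insert_self _ _,
        Finset.mem_insert_of_mem (Finset.mem_insert_self _ _),
        Finset.mem_insert_of_mem (Finset.mem_insert_of_mem
          (mem_Ax.mpr ⟨rfl, Finset.mem_erase.mpr ⟨hpv, hpV⟩, Ne.symm hip⟩))⟩
      intro q hq
      rcases Finset.mem_insert.mp hq with rfl | hq
      · exact ⟨hpV, hvV, hpv⟩
      rcases Finset.mem_insert.mp hq with rfl | hq
      · exact ⟨hvV, hiV, Ne.symm hiv⟩
      · obtain ⟨ha, hb, hc⟩ := mem_Ax.mp hq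
        exact ⟨ha ▸ hiV, herase1 hb, fun h => hc (h.symm.trans ha)⟩
    · obtain ⟨C0, hC0, rfl⟩ := Finset.mem_image.mp hC3
      obtain ⟨hcomp, a0, b0, c0, h1, h2, h3, m1, m2, m3⟩ := good2 C0 hC0
      refine ⟨?_, a0, b0, c0, h1, h2, h3,
        Finset.mem_insert_of_mem m1, Finset.mem_insert_of_mem m2, Finset.mem_insert_of_mem m3⟩
      intro q hq
      rcases Finset.mem_insert.mp hq with rfl | hq
      · exact ⟨hvV, hpV, Ne.symm hpv⟩
      · obtain ⟨ha, hb, hc⟩ := hcomp q hq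
        exact ⟨herase2 ha, herase2 hb, hc⟩
    · obtain ⟨i, hi, rfl⟩ := Finset.mem_image.mp hC4
      obtain ⟨hiV, hip, hiv⟩ := hmemM i hi
      refine ⟨?_, v, p, i, Ne.symm hpv, Ne.symm hip, Ne.symm hiv,
        Finset.mem_insert_self _ _,
        Finset.mem_insert_of_mem (Finset.mem_insert_self _ _),
        Finset.mem_insert_of_mem (Finset.mem_insert_of_mem
          (mem_Ax.mpr ⟨rfl, Finset.mem_erase.mpr ⟨Ne.symm hpv, hvV⟩, Ne.symm hiv⟩))⟩
      intro q hq
      rcases Finset.mem_insert.mp hq with rfl | hq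
      · exact ⟨hvV, hpV, Ne.symm hpv⟩
      rcases Finset.mem_insert.mp hq with rfl | hq
      · exact ⟨hpV, hiV, Ne.symm hip⟩
      · obtain ⟨ha, hb, hc⟩ := mem_Ax.mp hq
        exact ⟨ha ▸ hiV, herase2 hb, fun h => hc (h.symm.trans ha)⟩
  -- CARD
  · rw [hCY, Finset.card_union_of_disjoint d123_4, Finset.card_union_of_disjoint d12_3,
      Finset.card_union_of_disjoint d12,
      Finset.card_image_of_injOn (fun a ha b hb h => inj1 a ha b hb h),
      Finset.card_image_of_injOn (fun a ha b hb h => inj2 a ha b hb h),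
      Finset.card_image_of_injOn (fun a ha b hb h => inj3 a ha b hb h),
      Finset.card_image_of_injOn (fun a ha b hb h => inj4 a ha b hb h)]
    rw [hcard1] at card1
    rw [hcard2] at card2
    have hpow : 2 ^ (V.card - 1) + 2 ^ (V.card - 1) = 2 ^ V.card := by
      conv_rhs => rw [show V.card = V.card - 1 + 1 by omega, pow_succ]
      exact (mul_two _).symm
    rw [hcardM]
    generalize hA : (2 : ℕ) ^ (V.card - 1) = A at card1 card2 hpow
    generalize hB : (2 : ℕ) ^ V.card = B at hpow ⊢
    omega
  -- SUM
  · intro x hx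
    have hsum1 := sum1 x hx
    have hsum2 := sum2 x hx
    have hsplit1 : ∀ f : Fin n → ℝ, ∑ i ∈ V.erase v, f i = f p + ∑ i ∈ M, f i := by
      intro f; rw [hW1]; exact Finset.sum_insert hpM
    have hsplit2 : ∀ f : Fin n → ℝ, ∑ i ∈ V.erase p, f i = f v + ∑ i ∈ M, f i := by
      intro f; rw [hW2]; exact Finset.sum_insert hvM
    rw [hsplit1] at hsum1
    rw [hsplit2] at hsum2
    set a : ℝ := if x p v then 1 else 0 with ha_def
    set b : ℝ := if x v p then 1 else 0 with hb_def
    have hab : a + b = 1 := by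
      rw [ha_def, hb_def, hx p v hpv]
      cases x p v <;> norm_num
    set α := wVal n (Ax (V.erase v) p) x with hα
    set β := wVal n (Ax (V.erase p) v) x with hβ
    set SW1 := ∑ i ∈ M, wVal n (Ax (V.erase v) i) x with hSW1
    set SW2 := ∑ i ∈ M, wVal n (Ax (V.erase p) i) x with hSW2
    set SC1 := ∑ C ∈ CY (V.erase v), wVal n C x with hSC1
    set SC2 := ∑ C ∈ CY (V.erase p), wVal n C x with hSC2
    set S1 := ∑ i ∈ M, wVal n (Ax V i) x with hS1
    -- axiom sum over V
    have hAxp : wVal n (Ax V p) x = a * α := by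
      rw [hα, Ax_insert hvV hpv, wVal_insert not_mem_Ax_erase, ha_def]
    have hAxv : wVal n (Ax V v) x = b * β := by
      rw [hβ, Ax_insert hpV (Ne.symm hpv), wVal_insert not_mem_Ax_erase, hb_def]
    have hsplitV : ∀ f : Fin n → ℝ, ∑ i ∈ V, f i = f p + (f v + ∑ i ∈ M, f i) := by
      intro f
      rw [hVins, Finset.sum_insert (by simp [hpv, hpM]), Finset.sum_insert hvM]
    have hsumV : ∑ i ∈ V, wVal n (Ax V i) x = a * α + (b * β + S1) := by
      rw [hsplitV fun i => wVal n (Ax V i) x, hAxp, hAxv]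
    -- part sums
    have hsumP1 : ∑ B ∈ P1, wVal n B x = a * SC1 := by
      rw [hP1, Finset.sum_image (fun c hc c' hc' h => inj1 c hc c' hc' h), hSC1, Finset.mul_sum]
      exact Finset.sum_congr rfl fun C hC => by rw [wVal_insert (fresh1 C hC), ha_def]
    have hsumP3 : ∑ B ∈ P3, wVal n B x = b * SC2 := by
      rw [hP3, Finset.sum_image (fun c hc c' hc' h => inj3 c hc c' hc' h), hSC2, Finset.mul_sum]
      exact Finset.sum_congr rfl fun C hC => by rw [wVal_insert (fresh3 C hC), hb_def]
    have hsumP2 : ∑ B ∈ P2, wVal n B x = a * SW1 - a * S1 := by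
      rw [hP2, Finset.sum_image (fun c hc c' hc' h => inj2 c hc c' hc' h)]
      have : ∀ i ∈ M, wVal n (insert ((p : Fin n), v) (insert (v, i) (Ax (V.erase v) i))) x
          = a * wVal n (Ax (V.erase v) i) x - a * wVal n (Ax V i) x := by
        intro i hi
        obtain ⟨hiV, hip, hiv⟩ := hmemM i hi
        rw [wVal_insert (fresh2a i hi), wVal_insert (fresh2c i hi)]
        have hAxi : wVal n (Ax V i) x
            = (if x i v then (1:ℝ) else 0) * wVal n (Ax (V.erase v) i) x := by
          rw [Ax_insert hvV hiv, wVal_insert not_mem_Ax_erase]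
        have hflip : (if x v i then (1:ℝ) else 0) = 1 - (if x i v then (1:ℝ) else 0) := by
          rw [hx i v hiv]
          cases x i v <;> norm_num
        rw [hAxi, hflip, ha_def]
        ring
      rw [Finset.sum_congr rfl this, Finset.sum_sub_distrib, ← Finset.mul_sum, ← Finset.mul_sum,
        ← hSW1, ← hS1]
    have hsumP4 : ∑ B ∈ P4, wVal n B x = b * SW2 - b * S1 := by
      rw [hP4, Finset.sum_image (fun c hc c' hc' h => inj4 c hc c' hc' h)]
      have : ∀ i ∈ M, wVal n (insert ((v : Fin n), p) (insert (p, i) (Ax (V.erase p) i))) x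
          = b * wVal n (Ax (V.erase p) i) x - b * wVal n (Ax V i) x := by
        intro i hi
        obtain ⟨hiV, hip, hiv⟩ := hmemM i hi
        rw [wVal_insert (fresh4a i hi), wVal_insert (fresh4c i hi)]
        have hAxi : wVal n (Ax V i) x
            = (if x i p then (1:ℝ) else 0) * wVal n (Ax (V.erase p) i) x := by
          rw [Ax_insert hpV hip, wVal_insert not_mem_Ax_erase]
        have hflip : (if x p i then (1:ℝ) else 0) = 1 - (if x i p then (1:ℝ) else 0) := by
          rw [hx i p hip]
          cases x i p <;> norm_num
        rw [hAxi, hflip, hb_def]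
        ring
      rw [Finset.sum_congr rfl this, Finset.sum_sub_distrib, ← Finset.mul_sum, ← Finset.mul_sum,
        ← hSW2, ← hS1]
    rw [hCY, Finset.sum_union d123_4, Finset.sum_union d12_3, Finset.sum_union d12,
      hsumP1, hsumP2, hsumP3, hsumP4, hsumV]
    linear_combination a * hsum1 + b * hsum2 + (1 - S1) * hab
termination_by V.card
decreasing_by
  · exact Finset.card_erase_lt_of_mem hvV
  · exact Finset.card_erase_lt_of_mem hpV

lemma nonMinAxiom_eq (n : ℕ) (i : Fin n) : nonMinAxiom n i = Ax (Finset.univ : Finset (Fin n)) i := by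
  ext q
  rw [mem_Ax]
  simp only [nonMinAxiom, Finset.mem_image, Finset.mem_filter, Finset.mem_univ, true_and]
  constructor
  · rintro ⟨j, hj, rfl⟩
    exact ⟨rfl, hj⟩
  · rintro ⟨h1, h3⟩
    exact ⟨q.2, h3, by rw [← h1]⟩

end Stmt16


/-- For n ≥ 3 there is a family of 2^n - n weakenings of the ordering
principle axioms, with 0/1 coefficients, whose sum is the constant function 1 on all
Boolean assignments. -/
theorem stmt16 (n : ℕ) (hn : 3 ≤ n) :
    ∃ F : Finset (Finset (Fin n × Fin n)),
      (∀ E ∈ F, IsWeakening n E) ∧ F.card = 2 ^ n - n ∧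
      ∀ x : Fin n → Fin n → Bool, (∀ i j : Fin n, i ≠ j → x j i = !x i j) →
        ∑ E ∈ F, wVal n E x = 1 := by
  classical
  open Stmt16 in
  have hcardV : (Finset.univ : Finset (Fin n)).card = n := by simp
  obtain ⟨good, cardEq, sumEq⟩ := Stmt16.master (Finset.univ : Finset (Fin n)) (by omega)
  set U : Finset (Fin n) := Finset.univ with hU
  have hinj : ∀ i ∈ U, ∀ i' ∈ U, Stmt16.Ax U i = Stmt16.Ax U i' → i = i' := by
    intro i _ i' _ h
    obtain ⟨j, -, hj⟩ := Finset.exists_mem_ne (by rw [hcardV]; omega) i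
    have hmem : (i, j) ∈ Stmt16.Ax U i := Stmt16.mem_Ax.mpr ⟨rfl, Finset.mem_univ _, hj⟩
    rw [h] at hmem
    exact (Stmt16.mem_Ax.mp hmem).1
  have hdisj : Disjoint (U.image fun i => Stmt16.Ax U i) (Stmt16.CY U) := by
    rw [Finset.disjoint_left]
    intro B hB hB2
    obtain ⟨i, -, rfl⟩ := Finset.mem_image.mp hB
    obtain ⟨-, a, b, c, hab, -, -, m1, m2, -⟩ := good _ hB2
    have h1 := (Stmt16.mem_Ax.mp m1).1
    have h2 := (Stmt16.mem_Ax.mp m2).1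
    exact hab (h1.trans h2.symm)
  refine ⟨(U.image fun i => Stmt16.Ax U i) ∪ Stmt16.CY U, ?_, ?_, ?_⟩
  · intro E hE
    rcases Finset.mem_union.mp hE with hE | hE
    · obtain ⟨i, -, rfl⟩ := Finset.mem_image.mp hE
      constructor
      · intro q hq
        obtain ⟨h1, -, h3⟩ := Stmt16.mem_Ax.mp hq
        exact fun h => h3 (h.symm.trans h1)
      · exact Or.inl ⟨i, le_of_eq (Stmt16.nonMinAxiom_eq n i)⟩
    · obtain ⟨hcomp, a, b, c, hab, hbc, hac, m1, m2, m3⟩ := good E hE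
      constructor
      · exact fun q hq => (hcomp q hq).2.2
      · refine Or.inr ⟨a, b, c, hab, hbc, hac, ?_⟩
        simp only [Finset.insert_subset_iff, Finset.singleton_subset_iff]
        exact ⟨m1, m2, m3⟩
  · rw [Finset.card_union_of_disjoint hdisj, Finset.card_image_of_injOn
      (fun a ha b hb h => hinj a ha b hb h), hcardV]
    rw [hcardV] at cardEq
    generalize hB : (2 : ℕ) ^ n = B at cardEq ⊢
    omega
  · intro x hx
    rw [Finset.sum_union hdisj, Finset.sum_image (fun a ha b hb h => hinj a ha b hb h)]
    exact sumEq x hx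
end

section
/- Let x_{i,j} ∈ {0,1} for distinct i,j ∈ [n] with x_{j,i} = 1 − x_{i,j}. Define F_{j,m} = ∏_{i∈[m]\{j}} x_{j,i} for 1 ≤ j ≤ m ≤ n. Then for all 1 ≤ j ≤ m ≤ n−1: F_{j,m} = F_{j,m+1} + ∑_{k∈[m]\{j}} F_{j,m} x_{m+1,j} x_{k,m+1} ∏_{i∈[k−1]\{j}} x_{m+1,i} + F_{j,m} F_{m+1,m+1}, as functions on Boolean assignments. -/
/-- F_{j,m} = ∏_{i∈[m]∖{j}} x_{j,i}: indicator that j is first among {1,…,m}. -/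
noncomputable def Ford (x : ℕ → ℕ → ℝ) (j m : ℕ) : ℝ :=
  ∏ i ∈ (Finset.Icc 1 m).erase j, x j i


lemma telescope (y : ℕ → ℝ) (S : Finset ℕ) :
    (∑ k ∈ S, (1 - y k) * ∏ i ∈ S.filter (· < k), y i) + ∏ i ∈ S, y i = 1 := by
  induction S using Finset.induction_on_max with
  | empty => simp
  | insert a S ha ih =>
    have haS : a ∉ S := fun h => lt_irrefl a (ha a h)
    have h1 : (insert a S).filter (· < a) = S := by
      ext i
      simp only [Finset.mem_filter, Finset.mem_insert]
      constructor
      · rintro ⟨rfl | h, hlt⟩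
        · exact absurd hlt (lt_irrefl _)
        · exact h
      · intro hi; exact ⟨Or.inr hi, ha i hi⟩
    have h2 : ∀ k ∈ S, (insert a S).filter (· < k) = S.filter (· < k) := by
      intro k hk
      rw [Finset.filter_insert, if_neg (by exact not_lt.2 (le_of_lt (ha k hk)))]
    rw [Finset.sum_insert haS, Finset.prod_insert haS, h1,
        Finset.sum_congr rfl (fun k hk => by rw [h2 k hk])]
    linear_combination ih


/-- For Boolean x_{i,j} with x_{j,i} = 1 - x_{i,j} and 1 ≤ j ≤ m ≤ n-1,
F_{j,m} = F_{j,m+1} + ∑_{k∈[m]∖{j}} F_{j,m} x_{m+1,j} x_{k,m+1} ∏_{i∈[k-1]∖{j}} x_{m+1,i}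
        + F_{j,m} F_{m+1,m+1}. -/
theorem stmt17 (n : ℕ) (hn : 2 ≤ n) (x : ℕ → ℕ → ℝ)
    (hbool : ∀ i j : ℕ, i ≠ j → x i j = 0 ∨ x i j = 1)
    (hcomp : ∀ i j : ℕ, i ≠ j → x i j + x j i = 1)
    (j m : ℕ) (hj : 1 ≤ j) (hjm : j ≤ m) (hm : m ≤ n - 1) :
    Ford x j m = Ford x j (m + 1)
      + (∑ k ∈ (Finset.Icc 1 m).erase j,
          Ford x j m * x (m + 1) j * x k (m + 1) *
            ∏ i ∈ (Finset.Icc 1 (k - 1)).erase j, x (m + 1) i)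
      + Ford x j m * Ford x (m + 1) (m + 1) := by
  set S := (Finset.Icc 1 m).erase j with hS
  have hjm1 : j ≠ m + 1 := by omega
  -- key telescoping identity
  have key : (∑ k ∈ S, x k (m + 1) *
        ∏ i ∈ (Finset.Icc 1 (k - 1)).erase j, x (m + 1) i)
      + ∏ i ∈ S, x (m + 1) i = 1 := by
    rw [← telescope (fun i => x (m + 1) i) S]
    congr 1
    apply Finset.sum_congr rfl
    intro k hk
    have hk' : k ≠ j ∧ 1 ≤ k ∧ k ≤ m := by
      simpa [hS, Finset.mem_erase, Finset.mem_Icc] using hk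
    have hxk : x k (m + 1) = 1 - x (m + 1) k := by
      have := hcomp k (m + 1) (by omega)
      linarith
    have hfil : (Finset.Icc 1 (k - 1)).erase j = S.filter (· < k) := by
      ext i
      simp only [hS, Finset.mem_erase, Finset.mem_Icc, Finset.mem_filter]
      constructor
      · rintro ⟨hij, h1, h2⟩; exact ⟨⟨hij, h1, by omega⟩, by omega⟩
      · rintro ⟨⟨hij, h1, h2⟩, h3⟩; exact ⟨hij, h1, by omega⟩
    rw [hxk, hfil]
  -- Ford x j (m+1) = x j (m+1) * Ford x j m
  have hF1 : Ford x j (m + 1) = x j (m + 1) * Ford x j m := by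
    unfold Ford
    rw [show Finset.Icc 1 (m + 1) = insert (m + 1) (Finset.Icc 1 m) by
          rw [← Finset.insert_Icc_right_eq_Icc_add_one (by omega)],
        Finset.erase_insert_of_ne (Ne.symm hjm1),
        Finset.prod_insert (by simp [Finset.mem_erase, Finset.mem_Icc])]
  -- Ford x (m+1) (m+1) = x (m+1) j * ∏ i ∈ S, x (m+1) i
  have hF2 : Ford x (m + 1) (m + 1) = x (m + 1) j * ∏ i ∈ S, x (m + 1) i := by
    unfold Ford
    rw [show (Finset.Icc 1 (m + 1)).erase (m + 1) = Finset.Icc 1 m by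
          ext i; simp only [Finset.mem_erase, Finset.mem_Icc]; omega]
    rw [show Finset.Icc 1 m = insert j S by
          rw [hS, Finset.insert_erase (by simp [Finset.mem_Icc]; omega)]]
    rw [Finset.prod_insert (Finset.notMem_erase _ _)]
  have hsum : (∑ k ∈ S, Ford x j m * x (m + 1) j * x k (m + 1) *
        ∏ i ∈ (Finset.Icc 1 (k - 1)).erase j, x (m + 1) i)
      = Ford x j m * x (m + 1) j *
        ∑ k ∈ S, x k (m + 1) * ∏ i ∈ (Finset.Icc 1 (k - 1)).erase j, x (m + 1) i := by
    rw [Finset.mul_sum]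
    exact Finset.sum_congr rfl (fun k _ => by ring)
  rw [hF1, hF2, hsum]
  have hc := hcomp j (m + 1) hjm1
  linear_combination (-(Ford x j m * x (m + 1) j)) * key + (-(Ford x j m)) * hc
end

section
/- For the ordering principle on n elements, if coefficients c_W on weakenings satisfy ∑_W c_W W(x) = 1 for all Boolean assignments x having no minimum element, then there exist coefficients c'_W with ∑_W c'_W W(x) = 1 for all assignments x, and ∑_W |c'_W| ≤ (n+1)·(∑_W |c_W|) + n. -/
lemma wVal_union (n : ℕ) (E F : Finset (Fin n × Fin n)) (x : Fin n → Fin n → Bool) :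
    wVal n (E ∪ F) x = wVal n E x * wVal n F x := by
  classical
  unfold wVal
  by_cases h : ∀ p ∈ E ∩ F, x p.1 p.2 = true
  · have hinter : (∏ p ∈ E ∩ F, (if x p.1 p.2 then (1:ℝ) else 0)) = 1 :=
      Finset.prod_eq_one (fun p hp => by simp [h p hp])
    have h2 := Finset.prod_union_inter (s₁ := E) (s₂ := F)
      (f := fun p : Fin n × Fin n => if x p.1 p.2 then (1:ℝ) else 0)
    rw [hinter, mul_one] at h2
    exact h2
  · push_neg at h
    obtain ⟨p, hp, hx⟩ := h
    rw [Finset.prod_eq_zero (Finset.mem_union_left F (Finset.mem_of_mem_inter_left hp))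
      (by simp [hx]),
      Finset.prod_eq_zero (Finset.mem_of_mem_inter_left hp) (by simp [hx]), zero_mul]

lemma wVal_axiom (n : ℕ) (i : Fin n) (x : Fin n → Fin n → Bool) :
    wVal n (nonMinAxiom n i) x =
      if (∀ j : Fin n, j ≠ i → x i j = true) then 1 else 0 := by
  classical
  unfold wVal nonMinAxiom
  rw [Finset.prod_image (by intro a _ b _ h; simpa using h)]
  by_cases h : ∀ j : Fin n, j ≠ i → x i j = true
  · rw [if_pos h]
    exact Finset.prod_eq_one (fun j hj => by
      simp [h j (by simpa using (Finset.mem_filter.mp hj).2)])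
  · rw [if_neg h]
    push_neg at h
    obtain ⟨j, hj, hxj⟩ := h
    exact Finset.prod_eq_zero (i := j) (by simp [hj]) (by simp [hxj])

lemma nonMinAxiom_injective (n : ℕ) (hn : 2 ≤ n) :
    Function.Injective (nonMinAxiom n) := by
  intro i i' h
  have hj : ∃ j : Fin n, j ≠ i := by
    rcases n with _ | _ | m
    · omega
    · omega
    · by_cases h0 : i = 0
      · exact ⟨1, by simp [h0, Fin.ext_iff]⟩
      · exact ⟨0, fun hc => h0 hc.symm⟩
  obtain ⟨j, hj⟩ := hj
  have : (i, j) ∈ nonMinAxiom n i' := by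
    rw [← h]; unfold nonMinAxiom; simp [hj]
  unfold nonMinAxiom at this
  simp at this
  exact this.2.symm

/-- If coefficients c_W on weakenings give ∑ c_W W(x) = 1 on all
assignments x with no minimum element, then there are coefficients c'_W with
∑ c'_W W(x) = 1 on all assignments and ∑|c'_W| ≤ (n+1)·∑|c_W| + n. -/
theorem stmt19 (n : ℕ) (hn : 2 ≤ n)
    (𝒲 : Finset (Finset (Fin n × Fin n))) (c : Finset (Fin n × Fin n) → ℝ)
    (hW : ∀ E ∈ 𝒲, IsWeakening n E)
    (hproof : ∀ x : Fin n → Fin n → Bool, (∀ i j : Fin n, i ≠ j → x j i = !x i j) →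
      (¬ ∃ i : Fin n, ∀ j : Fin n, j ≠ i → x i j = true) →
      ∑ E ∈ 𝒲, c E * wVal n E x = 1) :
    ∃ (𝒲' : Finset (Finset (Fin n × Fin n))) (c' : Finset (Fin n × Fin n) → ℝ),
      (∀ E ∈ 𝒲', IsWeakening n E) ∧
      (∀ x : Fin n → Fin n → Bool, (∀ i j : Fin n, i ≠ j → x j i = !x i j) →
        ∑ E ∈ 𝒲', c' E * wVal n E x = 1) ∧
      ∑ E ∈ 𝒲', |c' E| ≤ (n + 1 : ℝ) * (∑ E ∈ 𝒲, |c E|) + n := by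
  classical
  set A : Fin n → Finset (Fin n × Fin n) := nonMinAxiom n with hA
  set g : Finset (Fin n × Fin n) × Fin n → Finset (Fin n × Fin n) :=
    fun p => p.1 ∪ A p.2 with hg
  set T : Finset (Finset (Fin n × Fin n) × Fin n) := 𝒲 ×ˢ Finset.univ with hT
  set 𝒲' : Finset (Finset (Fin n × Fin n)) :=
    (𝒲 ∪ T.image g) ∪ Finset.univ.image A with h𝒲'
  set c' : Finset (Fin n × Fin n) → ℝ := fun F =>
    (if F ∈ 𝒲 then c F else 0) - (∑ p ∈ T.filter (fun p => g p = F), c p.1)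
      + (if F ∈ Finset.univ.image A then 1 else 0) with hc'
  have hsub1 : 𝒲 ⊆ 𝒲' := fun F hF =>
    Finset.mem_union_left _ (Finset.mem_union_left _ hF)
  have hsub2 : Finset.univ.image A ⊆ 𝒲' := fun F hF => Finset.mem_union_right _ hF
  have hmaps : ∀ p ∈ T, g p ∈ 𝒲' := fun p hp =>
    Finset.mem_union_left _ (Finset.mem_union_right _ (Finset.mem_image_of_mem g hp))
  have hApairs : ∀ i : Fin n, ∀ p ∈ A i, p.1 ≠ p.2 := by
    intro i p hp
    simp only [hA, nonMinAxiom, Finset.mem_image, Finset.mem_filter] at hp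
    obtain ⟨j, ⟨_, hj⟩, rfl⟩ := hp
    exact fun h => hj h.symm
  -- filter identities
  have hfilt1 : 𝒲'.filter (fun F => F ∈ 𝒲) = 𝒲 := by
    ext F; simp only [Finset.mem_filter]
    exact ⟨fun h => h.2, fun h => ⟨hsub1 h, h⟩⟩
  have hfilt2 : 𝒲'.filter (fun F => F ∈ Finset.univ.image A) = Finset.univ.image A := by
    ext F; simp only [Finset.mem_filter]
    exact ⟨fun h => h.2, fun h => ⟨hsub2 h, h⟩⟩
  refine ⟨𝒲', c', ?_, ?_, ?_⟩
  · -- weakenings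
    intro F hF
    simp only [h𝒲', Finset.mem_union, Finset.mem_image] at hF
    rcases hF with (hF | ⟨p, hp, rfl⟩) | ⟨i, _, rfl⟩
    · exact hW F hF
    · have hp1 : p.1 ∈ 𝒲 := (Finset.mem_product.mp hp).1
      refine ⟨?_, Or.inl ⟨p.2, Finset.subset_union_right⟩⟩
      intro q hq
      rcases Finset.mem_union.mp hq with h | h
      · exact (hW p.1 hp1).1 q h
      · exact hApairs p.2 q h
    · exact ⟨hApairs i, Or.inl ⟨i, subset_rfl⟩⟩
  · -- the proof identity
    intro x hx
    have hval : ∑ E ∈ 𝒲', c' E * wVal n E x =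
        (∑ E ∈ 𝒲, c E * wVal n E x)
        - (∑ p ∈ T, c p.1 * wVal n (g p) x)
        + (∑ i : Fin n, wVal n (A i) x) := by
      simp only [hc', sub_mul, add_mul, Finset.sum_add_distrib, Finset.sum_sub_distrib]
      congr 1
      congr 1
      · simp only [ite_mul, zero_mul]
        rw [Finset.sum_ite_mem, Finset.inter_eq_right.mpr hsub1]
      · rw [← Finset.sum_fiberwise_of_maps_to hmaps (fun p => c p.1 * wVal n (g p) x)]
        refine Finset.sum_congr rfl (fun F _ => ?_)
        rw [Finset.sum_mul]
        exact Finset.sum_congr rfl (fun p hp => by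
          rw [(Finset.mem_filter.mp hp).2])
      · simp only [ite_mul, one_mul, zero_mul]
        rw [Finset.sum_ite_mem, Finset.inter_eq_right.mpr hsub2,
          Finset.sum_image (fun a _ b _ h => nonMinAxiom_injective n hn h)]
    have hTsum : ∑ p ∈ T, c p.1 * wVal n (g p) x =
        (∑ E ∈ 𝒲, c E * wVal n E x) * (∑ i : Fin n, wVal n (A i) x) := by
      rw [hT, Finset.sum_product, Finset.sum_mul]
      refine Finset.sum_congr rfl (fun W _ => ?_)
      rw [Finset.mul_sum]
      exact Finset.sum_congr rfl (fun i _ => by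
        show c W * wVal n (W ∪ A i) x = _
        rw [wVal_union]; ring)
    rw [hval, hTsum]
    -- at most one minimum
    by_cases hmin : ∃ i : Fin n, ∀ j : Fin n, j ≠ i → x i j = true
    · obtain ⟨i₀, hi₀⟩ := hmin
      have hS : (∑ i : Fin n, wVal n (A i) x) = 1 := by
        rw [Finset.sum_eq_single i₀]
        · rw [hA, wVal_axiom, if_pos hi₀]
        · intro i _ hi
          rw [hA, wVal_axiom, if_neg]
          intro hj
          have h1 : x i i₀ = true := hj i₀ (Ne.symm hi)
          have h2 : x i₀ i = true := hi₀ i hi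
          have := hx i i₀ hi
          rw [h1, h2] at this
          simp at this
        · simp
      rw [hS]; ring
    · have hS : (∑ i : Fin n, wVal n (A i) x) = 0 := by
        refine Finset.sum_eq_zero (fun i _ => ?_)
        rw [hA, wVal_axiom, if_neg (fun h => hmin ⟨i, h⟩)]
      rw [hS, hproof x hx hmin]; ring
  · -- norm bound
    have h1 : ∑ E ∈ 𝒲', |c' E| ≤
        (∑ E ∈ 𝒲', |if E ∈ 𝒲 then c E else 0|)
        + (∑ E ∈ 𝒲', |∑ p ∈ T.filter (fun p => g p = E), c p.1|)
        + (∑ E ∈ 𝒲', |if E ∈ Finset.univ.image A then (1:ℝ) else 0|) := by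
      rw [← Finset.sum_add_distrib, ← Finset.sum_add_distrib]
      refine Finset.sum_le_sum (fun E _ => ?_)
      calc |c' E| ≤ |(if E ∈ 𝒲 then c E else 0) - ∑ p ∈ T.filter (fun p => g p = E), c p.1|
            + |if E ∈ Finset.univ.image A then (1:ℝ) else 0| := abs_add_le _ _
        _ ≤ _ := by
            have := abs_sub (if E ∈ 𝒲 then c E else 0)
              (∑ p ∈ T.filter (fun p => g p = E), c p.1)
            linarith
    have e1 : (∑ E ∈ 𝒲', |if E ∈ 𝒲 then c E else 0|) = ∑ E ∈ 𝒲, |c E| := by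
      simp only [apply_ite abs, abs_zero]
      rw [Finset.sum_ite_mem, Finset.inter_eq_right.mpr hsub1]
    have e2 : (∑ E ∈ 𝒲', |∑ p ∈ T.filter (fun p => g p = E), c p.1|)
        ≤ (n : ℝ) * ∑ E ∈ 𝒲, |c E| := by
      calc (∑ E ∈ 𝒲', |∑ p ∈ T.filter (fun p => g p = E), c p.1|)
          ≤ ∑ E ∈ 𝒲', ∑ p ∈ T.filter (fun p => g p = E), |c p.1| :=
            Finset.sum_le_sum (fun E _ => Finset.abs_sum_le_sum_abs _ _)
        _ = ∑ p ∈ T, |c p.1| := Finset.sum_fiberwise_of_maps_to hmaps _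
        _ = (n : ℝ) * ∑ E ∈ 𝒲, |c E| := by
            rw [hT, Finset.sum_product, Finset.mul_sum]
            exact Finset.sum_congr rfl (fun W _ => by
              simp [Finset.sum_const, Finset.card_univ, mul_comm])
    have e3 : (∑ E ∈ 𝒲', |if E ∈ Finset.univ.image A then (1:ℝ) else 0|) ≤ (n : ℝ) := by
      calc (∑ E ∈ 𝒲', |if E ∈ Finset.univ.image A then (1:ℝ) else 0|)
          = ∑ E ∈ Finset.univ.image A, (1:ℝ) := by
            simp only [apply_ite abs, abs_one, abs_zero]
            rw [Finset.sum_ite_mem, Finset.inter_eq_right.mpr hsub2]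
        _ = ((Finset.univ.image A).card : ℝ) := by simp
        _ ≤ (n : ℝ) := by
            have := Finset.card_image_le (s := (Finset.univ : Finset (Fin n))) (f := A)
            simp only [Finset.card_univ, Fintype.card_fin] at this
            exact_mod_cast this
    have hnn : (0:ℝ) ≤ ∑ E ∈ 𝒲, |c E| := Finset.sum_nonneg (fun E _ => abs_nonneg _)
    nlinarith [h1, e1, e2, e3]
end
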